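/- arXiv:1909.11172 — 8 statements merged into one kernel-verified Lean document; each statement's English description precedes it below -/
import Mathlib

section
/- For tensors symmetric in their first k indices and in their last ℓ indices on an n-dimensional inner product space with n = 3, the commutator of the trace operator μ and the symmetrized metric product λ satisfies μλw = ((k+ℓ+1)/(kℓ)) w + ((k-1)(ℓ-1)/(kℓ)) λμw for any tensor w symmetric in its first k−1 and last ℓ−1 indices. -/
open Matrix BigOperators

noncomputable section

/-- Tensors on the 3-dimensional space with `k` indices in the first (symmetric) group and
`l` indices in the second (symmetric) group. -/
abbrev Tensor (k l : ℕ) := (Fin k → Fin 3) → (Fin l → Fin 3) → ℝ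

/-- Symmetrization over the first group of indices. -/
def symFst {k l : ℕ} (f : Tensor k l) : Tensor k l :=
  fun I J => (1 / (Nat.factorial k : ℝ)) * ∑ σ : Equiv.Perm (Fin k), f (I ∘ σ) J

/-- Symmetrization over the second group of indices. -/
def symSnd {k l : ℕ} (f : Tensor k l) : Tensor k l :=
  fun I J => (1 / (Nat.factorial l : ℝ)) * ∑ τ : Equiv.Perm (Fin l), f I (J ∘ τ)

/-- `f` is symmetric in its first group of indices and in its second group of indices. -/
def IsSym {k l : ℕ} (f : Tensor k l) : Prop :=
  ∀ (I : Fin k → Fin 3) (J : Fin l → Fin 3) (σ : Equiv.Perm (Fin k)) (τ : Equiv.Perm (Fin l)),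
    f (I ∘ σ) (J ∘ τ) = f I J

/-- The symmetrized tensor product with the metric `g`:
`(λ w)_{i₁…i_k j₁…j_ℓ} = Sym(i₁…i_k) Sym(j₁…j_ℓ) (g_{i_k j_ℓ} w_{i₁…i_{k-1} j₁…j_{ℓ-1}})`. -/
def lamOp (g : Matrix (Fin 3) (Fin 3) ℝ) {k l : ℕ} (w : Tensor k l) : Tensor (k + 1) (l + 1) :=
  symFst (symSnd (fun I J =>
    g (I (Fin.last k)) (J (Fin.last l)) * w (I ∘ Fin.castSucc) (J ∘ Fin.castSucc)))

/-- The trace operator `(μ u)_{i₁…i_{k-1} j₁…j_{ℓ-1}} = u_{i₁…i_k j₁…j_ℓ} g^{i_k j_ℓ}`,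
contracting the last index of each group with the inverse metric `ginv`. -/
def muOp (ginv : Matrix (Fin 3) (Fin 3) ℝ) {k l : ℕ} (u : Tensor (k + 1) (l + 1)) : Tensor k l :=
  fun I J => ∑ a : Fin 3, ∑ b : Fin 3, ginv a b * u (Fin.snoc I a) (Fin.snoc J b)

namespace MuLamAux

open Equiv

/-- Extend a permutation of `Fin k` to `Fin (k+1)`, fixing the last element. -/
def ext {k : ℕ} (e : Equiv.Perm (Fin k)) : Equiv.Perm (Fin (k + 1)) :=
  Equiv.permCongr finSuccEquivLast.symm e.optionCongr

@[simp] lemma ext_apply_castSucc {k : ℕ} (e : Equiv.Perm (Fin k)) (i : Fin k) :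
    ext e (Fin.castSucc i) = Fin.castSucc (e i) := by
  simp [ext]

@[simp] lemma ext_apply_last {k : ℕ} (e : Equiv.Perm (Fin k)) :
    ext e (Fin.last k) = Fin.last k := by
  simp [ext]

lemma comp_ext_castSucc {k : ℕ} (I : Fin (k + 1) → Fin 3) (e : Equiv.Perm (Fin k)) :
    (I ∘ ⇑(ext e)) ∘ Fin.castSucc = (I ∘ Fin.castSucc) ∘ ⇑e := by
  funext i; simp [Function.comp]

lemma comp_ext_last {k : ℕ} (I : Fin (k + 1) → Fin 3) (e : Equiv.Perm (Fin k)) :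
    (I ∘ ⇑(ext e)) (Fin.last k) = I (Fin.last k) := by
  simp [Function.comp]

lemma snoc_comp_ext {k : ℕ} (I : Fin k → Fin 3) (a : Fin 3) (e : Equiv.Perm (Fin k)) :
    (Fin.snoc I a : Fin (k + 1) → Fin 3) ∘ ⇑(ext e) = Fin.snoc (I ∘ ⇑e) a := by
  funext i
  induction i using Fin.lastCases with
  | last => simp [Function.comp]
  | cast i => simp [Function.comp]

def E (k : ℕ) : Equiv.Perm (Fin (k + 1)) ≃ Option (Fin k) × Equiv.Perm (Fin k) :=
  (Equiv.permCongr finSuccEquivLast).trans Equiv.Perm.decomposeOption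

lemma E_symm_coe {k : ℕ} (o : Option (Fin k)) (e : Equiv.Perm (Fin k)) :
    ⇑((E k).symm (o, e)) =
      ⇑(Equiv.swap (Fin.last k) (finSuccEquivLast.symm o)) ∘ ⇑(ext e) := by
  funext x
  have h := Equiv.symm_trans_swap_trans none o (finSuccEquivLast (n := k)).symm
  have h2 := Equiv.ext_iff.mp h (ext e x)
  simp only [Equiv.trans_apply, Equiv.symm_symm, finSuccEquivLast_symm_none] at h2
  rw [Function.comp_apply, ← h2]
  simp [E, ext, Equiv.permCongr_symm_apply, Equiv.Perm.mul_apply]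

lemma sum_collapse {k : ℕ} (f : (Fin (k + 1) → Fin 3) → ℝ)
    (hf : ∀ (I : Fin (k + 1) → Fin 3) (e : Equiv.Perm (Fin k)), f (I ∘ ⇑(ext e)) = f I)
    (I : Fin (k + 1) → Fin 3) :
    ∑ σ : Equiv.Perm (Fin (k + 1)), f (I ∘ ⇑σ)
      = (Nat.factorial k : ℝ) * ∑ p : Fin (k + 1), f (I ∘ ⇑(Equiv.swap (Fin.last k) p)) := by
  rw [← Equiv.sum_comp (E k).symm (fun σ : Equiv.Perm (Fin (k + 1)) => f (I ∘ ⇑σ))]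
  rw [Fintype.sum_prod_type]
  have h1 : ∀ (o : Option (Fin k)) (e : Equiv.Perm (Fin k)),
      f (I ∘ ⇑((E k).symm (o, e)))
        = f (I ∘ ⇑(Equiv.swap (Fin.last k) (finSuccEquivLast.symm o))) := by
    intro o e
    rw [E_symm_coe, ← Function.comp_assoc]
    exact hf _ e
  simp_rw [h1]
  simp only [Finset.sum_const, Finset.card_univ, Fintype.card_perm, Fintype.card_fin,
    nsmul_eq_mul]
  rw [← Finset.mul_sum]
  congr 1
  exact Equiv.sum_comp finSuccEquivLast.symm
    (fun p => f (I ∘ ⇑(Equiv.swap (Fin.last k) p)))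

lemma isSym_left {k l : ℕ} {w : Tensor k l} (hw : IsSym w)
    (I : Fin k → Fin 3) (J : Fin l → Fin 3) (σ : Equiv.Perm (Fin k)) :
    w (I ∘ ⇑σ) J = w I J := by
  have := hw I J σ 1
  simpa using this

lemma isSym_right {k l : ℕ} {w : Tensor k l} (hw : IsSym w)
    (I : Fin k → Fin 3) (J : Fin l → Fin 3) (τ : Equiv.Perm (Fin l)) :
    w I (J ∘ ⇑τ) = w I J := by
  have := hw I J 1 τ
  simpa using this

lemma lamOp_eq (g : Matrix (Fin 3) (Fin 3) ℝ) {k l : ℕ} (w : Tensor k l) (hw : IsSym w)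
    (I : Fin (k + 1) → Fin 3) (J : Fin (l + 1) → Fin 3) :
    lamOp g w I J = (((k : ℝ) + 1)⁻¹ * ((l : ℝ) + 1)⁻¹) *
      ∑ p : Fin (k + 1), ∑ q : Fin (l + 1),
        g (I p) (J q) * w ((I ∘ ⇑(Equiv.swap (Fin.last k) p)) ∘ Fin.castSucc)
          ((J ∘ ⇑(Equiv.swap (Fin.last l) q)) ∘ Fin.castSucc) := by
  have hinner : ∀ I' : Fin (k + 1) → Fin 3,
      (∑ τ : Equiv.Perm (Fin (l + 1)),
        g (I' (Fin.last k)) ((J ∘ ⇑τ) (Fin.last l)) *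
          w (I' ∘ Fin.castSucc) ((J ∘ ⇑τ) ∘ Fin.castSucc))
      = (Nat.factorial l : ℝ) * ∑ q : Fin (l + 1),
          g (I' (Fin.last k)) ((J ∘ ⇑(Equiv.swap (Fin.last l) q)) (Fin.last l)) *
            w (I' ∘ Fin.castSucc) ((J ∘ ⇑(Equiv.swap (Fin.last l) q)) ∘ Fin.castSucc) := by
    intro I'
    exact sum_collapse
      (f := fun J' => g (I' (Fin.last k)) (J' (Fin.last l)) *
        w (I' ∘ Fin.castSucc) (J' ∘ Fin.castSucc))
      (fun J' e => by
        beta_reduce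
        rw [comp_ext_last, comp_ext_castSucc, isSym_right hw]) J
  show (1 / ((Nat.factorial (k+1) : ℝ))) * ∑ σ : Equiv.Perm (Fin (k+1)),
      ((1 / ((Nat.factorial (l+1) : ℝ))) * ∑ τ : Equiv.Perm (Fin (l+1)),
        g ((I ∘ ⇑σ) (Fin.last k)) ((J ∘ ⇑τ) (Fin.last l)) *
          w ((I ∘ ⇑σ) ∘ Fin.castSucc) ((J ∘ ⇑τ) ∘ Fin.castSucc)) = _
  simp_rw [hinner]
  rw [sum_collapse
    (f := fun I' => (1 / ((Nat.factorial (l+1) : ℝ))) * ((Nat.factorial l : ℝ) *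
      ∑ q : Fin (l + 1),
        g (I' (Fin.last k)) ((J ∘ ⇑(Equiv.swap (Fin.last l) q)) (Fin.last l)) *
          w (I' ∘ Fin.castSucc) ((J ∘ ⇑(Equiv.swap (Fin.last l) q)) ∘ Fin.castSucc)))
    (fun I' e => by
      beta_reduce
      rw [comp_ext_last, comp_ext_castSucc]
      congr 2
      refine Finset.sum_congr rfl fun q _ => ?_
      rw [isSym_left hw]) I]
  simp_rw [Function.comp_apply, Equiv.swap_apply_left]
  have hk : ((Nat.factorial k : ℝ)) ≠ 0 := Nat.cast_ne_zero.mpr k.factorial_ne_zero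
  have hl : ((Nat.factorial l : ℝ)) ≠ 0 := Nat.cast_ne_zero.mpr l.factorial_ne_zero
  have hk1 : ((Nat.factorial (k+1) : ℝ)) = ((k : ℝ) + 1) * (Nat.factorial k : ℝ) := by
    rw [Nat.factorial_succ]; push_cast; ring
  have hl1 : ((Nat.factorial (l+1) : ℝ)) = ((l : ℝ) + 1) * (Nat.factorial l : ℝ) := by
    rw [Nat.factorial_succ]; push_cast; ring
  have hk2 : ((k : ℝ) + 1) ≠ 0 := by positivity
  have hl2 : ((l : ℝ) + 1) ≠ 0 := by positivity
  rw [hk1, hl1]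
  simp_rw [← mul_assoc, ← Finset.mul_sum]
  field_simp

lemma muOp_isSym (ginv : Matrix (Fin 3) (Fin 3) ℝ) {k l : ℕ} {w : Tensor (k+1) (l+1)}
    (hw : IsSym w) : IsSym (muOp ginv w) := by
  intro I J σ τ
  simp only [muOp]
  refine Finset.sum_congr rfl fun a _ => Finset.sum_congr rfl fun b _ => ?_
  congr 1
  calc w (Fin.snoc (I ∘ ⇑σ) a) (Fin.snoc (J ∘ ⇑τ) b)
      = w ((Fin.snoc I a) ∘ ⇑(ext σ)) ((Fin.snoc J b) ∘ ⇑(ext τ)) := by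
        rw [snoc_comp_ext, snoc_comp_ext]
    _ = w (Fin.snoc I a) (Fin.snoc J b) := hw _ _ _ _

lemma snoc_swap_last {k : ℕ} (I : Fin (k + 1) → Fin 3) (a : Fin 3) :
    ((Fin.snoc I a : Fin (k + 2) → Fin 3) ∘
        ⇑(Equiv.swap (Fin.last (k + 1)) (Fin.last (k + 1)))) ∘ Fin.castSucc = I := by
  funext i
  simp [Function.comp, Equiv.swap_self]

lemma snoc_swap_castSucc {k : ℕ} (I : Fin (k + 1) → Fin 3) (a : Fin 3) (p : Fin (k + 1)) :
    ((Fin.snoc I a : Fin (k + 2) → Fin 3) ∘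
        ⇑(Equiv.swap (Fin.last (k + 1)) p.castSucc)) ∘ Fin.castSucc = Function.update I p a := by
  funext i
  by_cases h : i = p
  · subst h
    simp [Function.comp, Equiv.swap_apply_right]
  · have h1 : (i.castSucc : Fin (k + 2)) ≠ Fin.last (k + 1) := (Fin.castSucc_lt_last i).ne
    have h2 : (i.castSucc : Fin (k + 2)) ≠ p.castSucc := by
      simpa [Fin.castSucc_inj] using h
    simp [Function.comp, Equiv.swap_apply_of_ne_of_ne h1 h2, Function.update_of_ne h]

lemma update_eq_snoc_comp_swap {k : ℕ} (I : Fin (k + 1) → Fin 3) (p : Fin (k + 1)) (a : Fin 3) :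
    Function.update I p a
      = (Fin.snoc ((I ∘ ⇑(Equiv.swap (Fin.last k) p)) ∘ Fin.castSucc) a : Fin (k + 1) → Fin 3)
          ∘ ⇑(Equiv.swap (Fin.last k) p) := by
  funext i
  rcases eq_or_ne i p with h | h
  · subst h
    simp [Function.comp, Equiv.swap_apply_right]
  · rw [Function.update_of_ne h, Function.comp_apply]
    rcases eq_or_ne i (Fin.last k) with hl | hl
    · subst hl
      have hp : p ≠ Fin.last k := Ne.symm h
      rw [Equiv.swap_apply_left]
      conv_rhs => rw [← Fin.castSucc_castPred p hp]
      rw [Fin.snoc_castSucc]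
      simp [Function.comp, Fin.castSucc_castPred, Equiv.swap_apply_right]
    · rw [Equiv.swap_apply_of_ne_of_ne hl h]
      conv_rhs => rw [← Fin.castSucc_castPred i hl, Fin.snoc_castSucc]
      simp [Function.comp, Fin.castSucc_castPred, Equiv.swap_apply_of_ne_of_ne hl h]

lemma split_sum {M N : ℕ} (T : Fin (M + 1) → Fin (N + 1) → ℝ) :
    (∑ p : Fin (M + 1), ∑ q : Fin (N + 1), T p q)
    = (∑ p : Fin M, ∑ q : Fin N, T p.castSucc q.castSucc)
      + (∑ p : Fin M, T p.castSucc (Fin.last N))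
      + (∑ q : Fin N, T (Fin.last M) q.castSucc)
      + T (Fin.last M) (Fin.last N) := by
  rw [Fin.sum_univ_castSucc (f := fun p => ∑ q : Fin (N + 1), T p q)]
  rw [Fin.sum_univ_castSucc (f := fun q => T (Fin.last M) q)]
  rw [Finset.sum_congr rfl
    (fun p _ => Fin.sum_univ_castSucc (f := fun q => T (Fin.castSucc p) q))]
  rw [Finset.sum_add_distrib]
  ring

lemma sum_comm4 {α β γ δ : Type*} [Fintype α] [Fintype β] [Fintype γ] [Fintype δ]
    (F : α → β → γ → δ → ℝ) :
    (∑ a : α, ∑ b : β, ∑ c : γ, ∑ d : δ, F a b c d)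
      = ∑ c : γ, ∑ d : δ, ∑ a : α, ∑ b : β, F a b c d :=
  calc (∑ a : α, ∑ b : β, ∑ c : γ, ∑ d : δ, F a b c d)
      = ∑ a : α, ∑ c : γ, ∑ b : β, ∑ d : δ, F a b c d :=
        Finset.sum_congr rfl fun a _ => Finset.sum_comm
    _ = ∑ c : γ, ∑ a : α, ∑ b : β, ∑ d : δ, F a b c d := Finset.sum_comm
    _ = ∑ c : γ, ∑ a : α, ∑ d : δ, ∑ b : β, F a b c d :=
        Finset.sum_congr rfl fun c _ => Finset.sum_congr rfl fun a _ => Finset.sum_comm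
    _ = ∑ c : γ, ∑ d : δ, ∑ a : α, ∑ b : β, F a b c d :=
        Finset.sum_congr rfl fun c _ => Finset.sum_comm

end MuLamAux

open MuLamAux in
/-- for tensors symmetric in the first `k = m+2` and last `ℓ = n+2` indices on a
3-dimensional inner product space, the commutator of the trace operator μ and the symmetrized
metric product λ satisfies `μλw = ((k+ℓ+1)/(kℓ)) w + ((k-1)(ℓ-1)/(kℓ)) λμw` for any tensor `w`
symmetric in its first `k-1` and last `ℓ-1` indices. -/
theorem mu_lam_commutator (g : Matrix (Fin 3) (Fin 3) ℝ) (hg : g.PosDef)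
    (m n : ℕ) (w : Tensor (m + 1) (n + 1)) (hw : IsSym w) :
    muOp g⁻¹ (lamOp g w) = fun I J =>
      ((((m : ℝ) + 2) + ((n : ℝ) + 2) + 1) / (((m : ℝ) + 2) * ((n : ℝ) + 2))) * w I J
      + (((((m : ℝ) + 2) - 1) * (((n : ℝ) + 2) - 1)) / (((m : ℝ) + 2) * ((n : ℝ) + 2)))
          * lamOp g (muOp g⁻¹ w) I J := by
  classical
  have hdet : IsUnit g.det := isUnit_iff_ne_zero.mpr hg.det_pos.ne'
  have hinv : g⁻¹ * g = 1 := Matrix.nonsing_inv_mul g hdet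
  have hsym : ∀ a b, g a b = g b a := by
    intro a b
    have := congrFun (congrFun hg.1 b) a
    simpa [Matrix.conjTranspose_apply] using this
  have hsymi : ∀ a b, g⁻¹ a b = g⁻¹ b a := by
    intro a b
    have ht : gᵀ = g := by
      ext i j; rw [Matrix.transpose_apply]; exact hsym j i
    have h2 : (g⁻¹)ᵀ = g⁻¹ := by rw [Matrix.transpose_nonsing_inv, ht]
    have := congrFun (congrFun h2 b) a
    simpa [Matrix.transpose_apply] using this
  have hcontract1 : ∀ (b c : Fin 3), (∑ a : Fin 3, g⁻¹ a b * g a c)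
      = if b = c then (1:ℝ) else 0 := by
    intro b c
    have h : (∑ a : Fin 3, g⁻¹ a b * g a c) = (g⁻¹ * g) b c := by
      rw [Matrix.mul_apply]
      exact Finset.sum_congr rfl fun a _ => by rw [hsymi]
    rw [h, hinv, Matrix.one_apply]
  have hcontract2 : ∀ (a c : Fin 3), (∑ b : Fin 3, g⁻¹ a b * g c b)
      = if a = c then (1:ℝ) else 0 := by
    intro a c
    have h : (∑ b : Fin 3, g⁻¹ a b * g c b) = (g⁻¹ * g) a c := by
      rw [Matrix.mul_apply]
      exact Finset.sum_congr rfl fun b _ => by rw [hsym c b]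
    rw [h, hinv, Matrix.one_apply]
  have htrace : (∑ a : Fin 3, ∑ b : Fin 3, g⁻¹ a b * g a b) = 3 := by
    have h : ∀ a, (∑ b : Fin 3, g⁻¹ a b * g a b) = (g⁻¹ * g) a a := by
      intro a; rw [Matrix.mul_apply]
      exact Finset.sum_congr rfl fun b _ => by rw [hsym a b]
    simp_rw [h, hinv, Matrix.one_apply_eq]
    norm_num
  have hwmu : IsSym (muOp g⁻¹ w) := muOp_isSym g⁻¹ hw
  funext I J
  have hL := lamOp_eq g (muOp g⁻¹ w) hwmu I J
  have expand : ∀ a b : Fin 3, lamOp g w (Fin.snoc I a) (Fin.snoc J b)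
      = ((((m+1 : ℕ) : ℝ) + 1)⁻¹ * (((n+1 : ℕ) : ℝ) + 1)⁻¹) *
        ((∑ p : Fin (m+1), ∑ q : Fin (n+1),
            g (I p) (J q) * w (Function.update I p a) (Function.update J q b))
         + (∑ p : Fin (m+1), g (I p) b * w (Function.update I p a) J)
         + (∑ q : Fin (n+1), g a (J q) * w I (Function.update J q b))
         + g a b * w I J) := by
    intro a b
    rw [lamOp_eq g w hw]
    congr 1
    rw [split_sum (T := fun p q => g ((Fin.snoc I a : Fin (m+2) → Fin 3) p)
        ((Fin.snoc J b : Fin (n+2) → Fin 3) q) *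
      w ((Fin.snoc I a ∘ ⇑(Equiv.swap (Fin.last (m+1)) p)) ∘ Fin.castSucc)
        ((Fin.snoc J b ∘ ⇑(Equiv.swap (Fin.last (n+1)) q)) ∘ Fin.castSucc))]
    simp only [snoc_swap_castSucc, snoc_swap_last, Fin.snoc_castSucc, Fin.snoc_last]
  show (∑ a : Fin 3, ∑ b : Fin 3, g⁻¹ a b * lamOp g w (Fin.snoc I a) (Fin.snoc J b)) = _
  simp_rw [expand]
  set C : ℝ := ((((m+1 : ℕ) : ℝ) + 1)⁻¹ * (((n+1 : ℕ) : ℝ) + 1)⁻¹) with hC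
  simp_rw [show ∀ (x y : ℝ), x * (C * y) = C * (x * y) from fun x y => by ring]
  simp_rw [← Finset.mul_sum]
  simp_rw [mul_add, Finset.sum_add_distrib]
  have hP1 : (∑ a : Fin 3, ∑ b : Fin 3, g⁻¹ a b * (g a b * w I J)) = 3 * w I J := by
    simp_rw [← mul_assoc, ← Finset.sum_mul]
    rw [htrace]
  have hP2 : (∑ a : Fin 3, ∑ b : Fin 3, g⁻¹ a b *
      ∑ p : Fin (m+1), g (I p) b * w (Function.update I p a) J)
      = ((m+1 : ℕ) : ℝ) * w I J := by
    have hstep : ∀ a : Fin 3, (∑ b : Fin 3, g⁻¹ a b *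
        ∑ p : Fin (m+1), g (I p) b * w (Function.update I p a) J)
        = ∑ p : Fin (m+1), (if a = I p then (1:ℝ) else 0) * w (Function.update I p a) J := by
      intro a
      simp_rw [Finset.mul_sum]
      rw [Finset.sum_comm]
      simp_rw [← mul_assoc, ← Finset.sum_mul, hcontract2]
    simp_rw [hstep, ite_mul, one_mul, zero_mul]
    rw [Finset.sum_comm]
    simp [Finset.sum_ite_eq', Function.update_eq_self]
  have hP3 : (∑ a : Fin 3, ∑ b : Fin 3, g⁻¹ a b *
      ∑ q : Fin (n+1), g a (J q) * w I (Function.update J q b))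
      = ((n+1 : ℕ) : ℝ) * w I J := by
    simp_rw [Finset.mul_sum]
    rw [Finset.sum_comm]
    have hstep : ∀ b : Fin 3, (∑ a : Fin 3, ∑ q : Fin (n+1),
        g⁻¹ a b * (g a (J q) * w I (Function.update J q b)))
        = ∑ q : Fin (n+1), (if b = J q then (1:ℝ) else 0) * w I (Function.update J q b) := by
      intro b
      rw [Finset.sum_comm]
      simp_rw [← mul_assoc, ← Finset.sum_mul, hcontract1]
    simp_rw [hstep, ite_mul, one_mul, zero_mul]
    rw [Finset.sum_comm]
    simp [Finset.sum_ite_eq', Function.update_eq_self]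
  have hm0 : ((m : ℝ) + 1) ≠ 0 := by positivity
  have hn0 : ((n : ℝ) + 1) ≠ 0 := by positivity
  have hP4 : (∑ a : Fin 3, ∑ b : Fin 3, g⁻¹ a b *
      ∑ p : Fin (m+1), ∑ q : Fin (n+1),
        g (I p) (J q) * w (Function.update I p a) (Function.update J q b))
      = ((m : ℝ) + 1) * (((n : ℝ) + 1) * lamOp g (muOp g⁻¹ w) I J) := by
    have hupdate : ∀ (p : Fin (m+1)) (q : Fin (n+1)) (a b : Fin 3),
        w (Function.update I p a) (Function.update J q b)
          = w (Fin.snoc ((I ∘ ⇑(Equiv.swap (Fin.last m) p)) ∘ Fin.castSucc) a)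
              (Fin.snoc ((J ∘ ⇑(Equiv.swap (Fin.last n) q)) ∘ Fin.castSucc) b) := by
      intro p q a b
      conv_lhs => rw [update_eq_snoc_comp_swap I p a, update_eq_snoc_comp_swap J q b]
      exact hw _ _ _ _
    simp_rw [hupdate, Finset.mul_sum]
    rw [sum_comm4]
    simp_rw [show ∀ (p : Fin (m+1)) (q : Fin (n+1)) (a b : Fin 3),
        g⁻¹ a b * (g (I p) (J q) *
          w (Fin.snoc ((I ∘ ⇑(Equiv.swap (Fin.last m) p)) ∘ Fin.castSucc) a)
            (Fin.snoc ((J ∘ ⇑(Equiv.swap (Fin.last n) q)) ∘ Fin.castSucc) b))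
        = g (I p) (J q) * (g⁻¹ a b *
          w (Fin.snoc ((I ∘ ⇑(Equiv.swap (Fin.last m) p)) ∘ Fin.castSucc) a)
            (Fin.snoc ((J ∘ ⇑(Equiv.swap (Fin.last n) q)) ∘ Fin.castSucc) b))
      from fun p q a b => by ring]
    simp_rw [← Finset.mul_sum]
    have hmu : ∀ (p : Fin (m+1)) (q : Fin (n+1)),
        (∑ a : Fin 3, ∑ b : Fin 3, g⁻¹ a b *
          w (Fin.snoc ((I ∘ ⇑(Equiv.swap (Fin.last m) p)) ∘ Fin.castSucc) a)
            (Fin.snoc ((J ∘ ⇑(Equiv.swap (Fin.last n) q)) ∘ Fin.castSucc) b))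
        = muOp g⁻¹ w ((I ∘ ⇑(Equiv.swap (Fin.last m) p)) ∘ Fin.castSucc)
            ((J ∘ ⇑(Equiv.swap (Fin.last n) q)) ∘ Fin.castSucc) := fun p q => rfl
    simp_rw [hmu]
    rw [hL]
    field_simp
  rw [hP1, hP2, hP3, hP4, hC]
  push_cast
  have hm2 : ((m : ℝ) + 1 + 1) ≠ 0 := by positivity
  have hn2 : ((n : ℝ) + 1 + 1) ≠ 0 := by positivity
  have hm2' : ((m : ℝ) + 2) ≠ 0 := by positivity
  have hn2' : ((n : ℝ) + 2) ≠ 0 := by positivity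
  field_simp
  ring
end
end

section
/- On a 3-dimensional inner product space, for any symmetric m-tensor v, the composition μλ applied to v equals ((m+3)/(m+1)) v, where λ is the symmetrized tensor product with the metric and μ is the trace operator pairing the last index of each symmetric group. -/
open Matrix BigOperators

noncomputable section

/-- A symmetric tensor is invariant under precomposition with any injective map. -/
lemma isSym_comp_inj {m : ℕ} (v : Tensor m 0) (hv : IsSym v)
    (I : Fin m → Fin 3) (J : Fin 0 → Fin 3) (h : Fin m → Fin m)
    (hinj : Function.Injective h) :
    v (I ∘ h) J = v I J := by
  have hb : Function.Bijective h := Finite.injective_iff_bijective.mp hinj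
  have := hv I J (Equiv.ofBijective h hb) 1
  have hJ : (J ∘ ⇑(1 : Equiv.Perm (Fin 0))) = J := Subsingleton.elim _ _
  rw [hJ] at this
  simpa [Equiv.ofBijective] using this

lemma count_perm (m : ℕ) :
    (∑ σ : Equiv.Perm (Fin (m + 1)),
      (if σ (Fin.last m) = Fin.last m then (3 : ℝ) else 1))
      = ((m : ℝ) + 3) * Nat.factorial m := by
  classical
  set r : Equiv.Perm (Fin (m + 1)) := Equiv.swap 0 (Fin.last m) with hr
  have hbij : Function.Bijective (fun σ : Equiv.Perm (Fin (m + 1)) => r * σ * r) := by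
    constructor
    · intro σ τ h
      simpa [mul_assoc] using congrArg (fun x => r⁻¹ * x * r⁻¹) h
    · intro σ
      exact ⟨r⁻¹ * σ * r⁻¹, by group⟩
  rw [← Function.Bijective.sum_comp hbij
    (fun σ => if σ (Fin.last m) = Fin.last m then (3 : ℝ) else 1)]
  have hcond : ∀ σ : Equiv.Perm (Fin (m + 1)),
      ((r * σ * r) (Fin.last m) = Fin.last m) ↔ (σ 0 = 0) := by
    intro σ
    simp only [Equiv.Perm.mul_apply, hr]
    rw [Equiv.swap_apply_right]
    constructor
    · intro h
      have := congrArg (Equiv.swap (0 : Fin (m+1)) (Fin.last m)) h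
      rwa [Equiv.swap_apply_self, Equiv.swap_apply_right] at this
    · intro h; rw [h, Equiv.swap_apply_left]
  have : ∀ σ : Equiv.Perm (Fin (m + 1)),
      (if (r * σ * r) (Fin.last m) = Fin.last m then (3 : ℝ) else 1)
      = (if σ 0 = 0 then (3 : ℝ) else 1) := by
    intro σ; simp only [hcond σ]
  simp only [this]
  rw [← Equiv.sum_comp (Equiv.Perm.decomposeFin (n := m)).symm
    (fun σ => if σ 0 = 0 then (3 : ℝ) else 1)]
  rw [Fintype.sum_prod_type]
  have : ∀ p : Fin (m + 1), ∀ e : Equiv.Perm (Fin m),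
      (if (Equiv.Perm.decomposeFin.symm (p, e)) 0 = 0 then (3 : ℝ) else 1)
      = (if p = 0 then (3 : ℝ) else 1) := by
    intro p e; rw [Equiv.Perm.decomposeFin_symm_apply_zero]
  simp only [this, Finset.sum_const, Finset.card_univ, Fintype.card_perm, nsmul_eq_mul]
  rw [← Finset.mul_sum]
  have hsplit : ∀ x : Fin (m + 1), (if x = 0 then (3:ℝ) else 1)
      = 1 + (if x = 0 then (2:ℝ) else 0) := by
    intro x; split <;> norm_num
  simp only [hsplit, Finset.sum_add_distrib, Finset.sum_const, Finset.card_univ,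
    Fintype.card_fin, nsmul_eq_mul, mul_one, Finset.sum_ite_eq', Finset.mem_univ, if_pos,
    Fintype.card_fin]
  push_cast
  ring

lemma snoc_eq_castPred {m : ℕ} (I : Fin m → Fin 3) (a : Fin 3) (x : Fin (m + 1))
    (hx : x ≠ Fin.last m) : (Fin.snoc I a : Fin (m + 1) → Fin 3) x = I (x.castPred hx) := by
  obtain ⟨y, rfl⟩ := Fin.exists_castSucc_eq.mpr hx
  simp [Fin.snoc_castSucc, Fin.castPred_castSucc]

lemma triple_swap {α β γ : Type*} [Fintype α] [Fintype β] [Fintype γ] (f : α → β → γ → ℝ) :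
    (∑ a : α, ∑ b : β, ∑ c : γ, f a b c) = ∑ c : γ, ∑ a : α, ∑ b : β, f a b c :=
  (Finset.sum_congr rfl fun _ _ => Finset.sum_comm).trans Finset.sum_comm

/-- on a 3-dimensional inner product space, for any symmetric `m`-tensor `v`,
`μ(λ v) = ((m+3)/(m+1)) v`, where λ is the symmetrized tensor product with the metric and μ
is the trace operator pairing the last index of each symmetric group. -/
theorem mu_lam_symmetric_tensor (g : Matrix (Fin 3) (Fin 3) ℝ) (hg : g.PosDef)
    (m : ℕ) (v : Tensor m 0) (hv : IsSym v) :
    muOp g⁻¹ (lamOp g v) = fun I J => (((m : ℝ) + 3) / ((m : ℝ) + 1)) * v I J := by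
  classical
  funext I J
  have hgdet : IsUnit g.det := isUnit_iff_ne_zero.mpr hg.det_pos.ne'
  have hginv : g⁻¹ * g = 1 := Matrix.nonsing_inv_mul g hgdet
  have hgsymm : ∀ x y, g x y = g y x := by
    intro x y
    have := hg.isHermitian
    rw [Matrix.IsHermitian] at this
    conv_lhs => rw [← this]
    simp [Matrix.conjTranspose_apply]
  -- Step 1: unfold and simplify the trivial second-group symmetrization
  have step1 : muOp g⁻¹ (lamOp g v) I J
      = ∑ a : Fin 3, ∑ b : Fin 3, g⁻¹ a b *
        ((1 / (Nat.factorial (m + 1) : ℝ)) * ∑ σ : Equiv.Perm (Fin (m + 1)),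
          g ((Fin.snoc I a : Fin (m+1) → Fin 3) (σ (Fin.last m))) b *
            v ((Fin.snoc I a) ∘ ⇑σ ∘ Fin.castSucc) J) := by
    unfold muOp lamOp symFst symSnd
    refine Finset.sum_congr rfl (fun a _ => Finset.sum_congr rfl (fun b _ => ?_))
    congr 1
    congr 1
    refine Finset.sum_congr rfl (fun σ _ => ?_)
    have huniq : ∀ f : Equiv.Perm (Fin 1) → ℝ, (∑ τ : Equiv.Perm (Fin 1), f τ) = f 1 := by
      intro f
      rw [Finset.sum_eq_single 1]
      · intro τ _ hτ; exact absurd (Subsingleton.elim τ 1) hτ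
      · intro h; exact absurd (Finset.mem_univ _) h
    rw [huniq]
    simp only [Nat.zero_add, Nat.factorial_one, Nat.cast_one, one_div, inv_one, one_mul]
    have e1 : ((Fin.snoc J b ∘ ⇑(1 : Equiv.Perm (Fin 1))) (Fin.last 0)) = b := by
      simp [Fin.snoc]
    have e2 : ((Fin.snoc J b ∘ ⇑(1 : Equiv.Perm (Fin 1))) ∘ Fin.castSucc : Fin 0 → Fin 3) = J :=
      Subsingleton.elim _ _
    rw [e1, e2]
    rfl
  rw [step1]
  -- Step 2: exchange the sums and pull out the factorial constant
  have step2 : (∑ a : Fin 3, ∑ b : Fin 3, g⁻¹ a b *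
        ((1 / (Nat.factorial (m + 1) : ℝ)) * ∑ σ : Equiv.Perm (Fin (m + 1)),
          g ((Fin.snoc I a : Fin (m+1) → Fin 3) (σ (Fin.last m))) b *
            v ((Fin.snoc I a) ∘ ⇑σ ∘ Fin.castSucc) J))
      = (1 / (Nat.factorial (m + 1) : ℝ)) * ∑ σ : Equiv.Perm (Fin (m + 1)),
          ∑ a : Fin 3, ∑ b : Fin 3, g⁻¹ a b *
            (g ((Fin.snoc I a : Fin (m+1) → Fin 3) (σ (Fin.last m))) b *
              v ((Fin.snoc I a) ∘ ⇑σ ∘ Fin.castSucc) J) := by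
    simp only [Finset.mul_sum]
    rw [triple_swap]
    exact Finset.sum_congr rfl fun σ _ => Finset.sum_congr rfl fun a _ =>
      Finset.sum_congr rfl fun b _ => by ring
  rw [step2]
  -- Step 3: the key computation for each permutation
  have key : ∀ σ : Equiv.Perm (Fin (m + 1)),
      (∑ a : Fin 3, ∑ b : Fin 3, g⁻¹ a b *
        (g ((Fin.snoc I a : Fin (m+1) → Fin 3) (σ (Fin.last m))) b *
          v ((Fin.snoc I a) ∘ ⇑σ ∘ Fin.castSucc) J))
      = (if σ (Fin.last m) = Fin.last m then (3 : ℝ) else 1) * v I J := by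
    intro σ
    -- contract b-sum : ∑ b, g⁻¹ a b * g x b = (1 : Matrix _ _ ℝ) a x
    have hcontr : ∀ (a : Fin 3) (x : Fin 3),
        (∑ b : Fin 3, g⁻¹ a b * g x b) = if a = x then (1 : ℝ) else 0 := by
      intro a x
      have : (∑ b : Fin 3, g⁻¹ a b * g b x) = (g⁻¹ * g) a x := by
        rw [Matrix.mul_apply]
      calc (∑ b : Fin 3, g⁻¹ a b * g x b)
          = ∑ b : Fin 3, g⁻¹ a b * g b x := by
            refine Finset.sum_congr rfl (fun b _ => ?_); rw [hgsymm x b]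
        _ = (g⁻¹ * g) a x := this
        _ = (1 : Matrix (Fin 3) (Fin 3) ℝ) a x := by rw [hginv]
        _ = if a = x then 1 else 0 := Matrix.one_apply
    have hstep : (∑ a : Fin 3, ∑ b : Fin 3, g⁻¹ a b *
        (g ((Fin.snoc I a : Fin (m+1) → Fin 3) (σ (Fin.last m))) b *
          v ((Fin.snoc I a) ∘ ⇑σ ∘ Fin.castSucc) J))
        = ∑ a : Fin 3, (if a = (Fin.snoc I a : Fin (m+1) → Fin 3) (σ (Fin.last m)) then (1:ℝ) else 0) *
            v ((Fin.snoc I a) ∘ ⇑σ ∘ Fin.castSucc) J := by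
      refine Finset.sum_congr rfl (fun a _ => ?_)
      rw [← hcontr a ((Fin.snoc I a : Fin (m+1) → Fin 3) (σ (Fin.last m))), Finset.sum_mul]
      refine Finset.sum_congr rfl (fun b _ => ?_)
      ring
    rw [hstep]
    by_cases hfix : σ (Fin.last m) = Fin.last m
    · -- fixed case
      rw [if_pos hfix]
      have hterm : ∀ a : Fin 3,
          (if a = (Fin.snoc I a : Fin (m+1) → Fin 3) (σ (Fin.last m)) then (1:ℝ) else 0) *
            v ((Fin.snoc I a) ∘ ⇑σ ∘ Fin.castSucc) J = v I J := by
        intro a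
        have hx : ((Fin.snoc I a : Fin (m+1) → Fin 3) (σ (Fin.last m)) : Fin 3) = a := by
          rw [hfix, Fin.snoc_last]
        rw [hx, if_pos rfl, one_mul]
        -- the composed map avoids the last slot
        have hne : ∀ i : Fin m, σ (Fin.castSucc i) ≠ Fin.last m := by
          intro i h
          have := σ.injective (h.trans hfix.symm)
          exact (Fin.castSucc_lt_last i).ne this
        set h : Fin m → Fin m := fun i => (σ (Fin.castSucc i)).castPred (hne i) with hdef
        have hcomp : (Fin.snoc I a) ∘ ⇑σ ∘ Fin.castSucc = I ∘ h := by
          funext i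
          simp only [Function.comp_apply, hdef]
          exact snoc_eq_castPred I a _ (hne i)
        have hinj : Function.Injective h := by
          intro i j hij
          have : σ (Fin.castSucc i) = σ (Fin.castSucc j) := by
            have := congrArg Fin.castSucc hij
            simpa only [hdef, Fin.castSucc_castPred] using this
          exact Fin.castSucc_injective m (σ.injective this)
        rw [hcomp]
        exact isSym_comp_inj v hv I J h hinj
      simp only [hterm, Finset.sum_const, Finset.card_univ]
      norm_num
    · -- non-fixed case
      rw [if_neg hfix]
      set c : Fin m := (σ (Fin.last m)).castPred hfix with hc
      have hcast : σ (Fin.last m) = Fin.castSucc c := (Fin.castSucc_castPred _ hfix).symm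
      have hx : ∀ a : Fin 3, ((Fin.snoc I a : Fin (m+1) → Fin 3) (σ (Fin.last m)) : Fin 3) = I c := by
        intro a; rw [hcast, Fin.snoc_castSucc]
      have hsum : (∑ a : Fin 3, (if a = (Fin.snoc I a : Fin (m+1) → Fin 3) (σ (Fin.last m)) then (1:ℝ) else 0) *
            v ((Fin.snoc I a) ∘ ⇑σ ∘ Fin.castSucc) J)
          = v ((Fin.snoc I (I c)) ∘ ⇑σ ∘ Fin.castSucc) J := by
        have : ∀ a : Fin 3, (if a = (Fin.snoc I a : Fin (m+1) → Fin 3) (σ (Fin.last m)) then (1:ℝ) else 0) *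
            v ((Fin.snoc I a) ∘ ⇑σ ∘ Fin.castSucc) J
            = (if a = I c then (1:ℝ) else 0) * v ((Fin.snoc I a) ∘ ⇑σ ∘ Fin.castSucc) J := by
          intro a; rw [hx a]
        simp only [this]
        rw [Finset.sum_eq_single (I c)]
        · rw [if_pos rfl, one_mul]
        · intro b _ hb; rw [if_neg hb, zero_mul]
        · intro h; exact absurd (Finset.mem_univ _) h
      rw [hsum, one_mul]
      -- now show this equals v I J
      set h : Fin m → Fin m := fun i =>
        if hi : σ (Fin.castSucc i) = Fin.last m then c
        else (σ (Fin.castSucc i)).castPred hi with hdef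
      have hcomp : (Fin.snoc I (I c)) ∘ ⇑σ ∘ Fin.castSucc = I ∘ h := by
        funext i
        simp only [Function.comp_apply, hdef]
        by_cases hi : σ (Fin.castSucc i) = Fin.last m
        · rw [dif_pos hi, hi, Fin.snoc_last]
        · rw [dif_neg hi]; exact snoc_eq_castPred I (I c) _ hi
      have hinj : Function.Injective h := by
        intro i j hij
        simp only [hdef] at hij
        by_cases hi : σ (Fin.castSucc i) = Fin.last m <;>
          by_cases hj : σ (Fin.castSucc j) = Fin.last m
        · exact Fin.castSucc_injective m (σ.injective (hi.trans hj.symm))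
        · exfalso
          rw [dif_pos hi, dif_neg hj] at hij
          have hj' : σ (Fin.castSucc j) = Fin.castSucc c := by
            have := congrArg Fin.castSucc hij
            simpa only [Fin.castSucc_castPred] using this.symm
          have : Fin.castSucc j = Fin.last m := σ.injective (hj'.trans hcast.symm)
          exact (Fin.castSucc_lt_last j).ne this
        · exfalso
          rw [dif_neg hi, dif_pos hj] at hij
          have hi' : σ (Fin.castSucc i) = Fin.castSucc c := by
            have := congrArg Fin.castSucc hij
            simpa only [Fin.castSucc_castPred] using this
          have : Fin.castSucc i = Fin.last m := σ.injective (hi'.trans hcast.symm)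
          exact (Fin.castSucc_lt_last i).ne this
        · rw [dif_neg hi, dif_neg hj] at hij
          have : σ (Fin.castSucc i) = σ (Fin.castSucc j) := by
            have := congrArg Fin.castSucc hij
            simpa only [Fin.castSucc_castPred] using this
          exact Fin.castSucc_injective m (σ.injective this)
      rw [hcomp]
      exact isSym_comp_inj v hv I J h hinj
  simp only [key]
  rw [← Finset.sum_mul, count_perm m]
  have hfact : (Nat.factorial (m + 1) : ℝ) = ((m : ℝ) + 1) * Nat.factorial m := by
    rw [Nat.factorial_succ]; push_cast; ring
  rw [hfact]
  have h1 : (Nat.factorial m : ℝ) ≠ 0 := Nat.cast_ne_zero.mpr (Nat.factorial_ne_zero m)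
  have h2 : ((m : ℝ) + 1) ≠ 0 := by positivity
  field_simp
end
end

section
/- For k = ℓ = 2 tensors on a 3-dimensional inner product space, the projection onto trace-free tensors is given by B f = f − λ A f, where A f = (1/a₁) μf − (b₁/(a₁a₂)) λ μ² f with a₁ = 5/4, a₂ = 2·(4)/4 = 2 (more precisely a_K = K(k+ℓ+2−K)/(kℓ) and b_K = (k−K)(ℓ−K)/(kℓ) with k=ℓ=2), and B f lies in the kernel of μ while f − B f lies in the image of λ. -/
open Matrix BigOperators

noncomputable section

lemma sum_perm_one (F : Equiv.Perm (Fin 1) → ℝ) : ∑ σ : Equiv.Perm (Fin 1), F σ = F 1 := by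
  rw [show (Finset.univ : Finset (Equiv.Perm (Fin 1))) = {1} by decide]; simp

lemma sum_perm_two (F : Equiv.Perm (Fin 2) → ℝ) :
    ∑ σ : Equiv.Perm (Fin 2), F σ = F 1 + F (Equiv.swap 0 1) := by
  rw [show (Finset.univ : Finset (Equiv.Perm (Fin 2))) = {1, Equiv.swap 0 1} by decide]
  rw [Finset.sum_insert (by decide), Finset.sum_singleton]

lemma snoc0 (I : Fin 1 → Fin 3) (a : Fin 3) : (Fin.snoc I a : Fin 2 → Fin 3) 0 = I 0 := by
  simp [Fin.snoc]

lemma snoc1 (I : Fin 1 → Fin 3) (a : Fin 3) : (Fin.snoc I a : Fin 2 → Fin 3) 1 = a := by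
  simp [Fin.snoc]

lemma snoc_emp (e : Fin 0 → Fin 3) (a : Fin 3) : (Fin.snoc e a : Fin 1 → Fin 3) = fun _ => a := by
  funext x; fin_cases x; simp [Fin.snoc]

lemma lamOp_one_one (g : Matrix (Fin 3) (Fin 3) ℝ) (w : Tensor 1 1) (I J : Fin 2 → Fin 3) :
    lamOp g w I J = (1/4) * (g (I 1) (J 1) * w (fun _ => I 0) (fun _ => J 0)
      + g (I 0) (J 1) * w (fun _ => I 1) (fun _ => J 0)
      + g (I 1) (J 0) * w (fun _ => I 0) (fun _ => J 1)
      + g (I 0) (J 0) * w (fun _ => I 1) (fun _ => J 1)) := by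
  have e0 : ∀ K : Fin 2 → Fin 3, (K ∘ Fin.castSucc : Fin 1 → Fin 3) = fun _ => K 0 := by
    intro K; funext x; fin_cases x; rfl
  have e1 : ∀ K : Fin 2 → Fin 3, ((K ∘ ⇑(Equiv.swap 0 1)) ∘ Fin.castSucc : Fin 1 → Fin 3) = fun _ => K 1 := by
    intro K; funext x; fin_cases x; rfl
  simp only [lamOp, symFst, symSnd, Nat.reduceAdd, sum_perm_two, Equiv.Perm.coe_one,
    Function.comp_id, e0, e1, Equiv.swap_apply_left, Equiv.swap_apply_right, Function.comp_apply]
  norm_num [Fin.last]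
  ring

lemma lamOp_zero (g : Matrix (Fin 3) (Fin 3) ℝ) (c : Tensor 0 0) (I J : Fin 1 → Fin 3) :
    lamOp g c I J = g (I 0) (J 0) * c (fun x => x.elim0) (fun x => x.elim0) := by
  simp only [lamOp, symFst, symSnd, Nat.reduceAdd, sum_perm_one, Equiv.Perm.coe_one,
    Function.comp_id]
  rw [show (I ∘ Fin.castSucc : Fin 0 → Fin 3) = (fun x => x.elim0) from funext fun x => x.elim0,
      show (J ∘ Fin.castSucc : Fin 0 → Fin 3) = (fun x => x.elim0) from funext fun x => x.elim0]
  norm_num [Fin.last]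

section contr
variable (g h : Matrix (Fin 3) (Fin 3) ℝ)
  (hgs : ∀ i j, g i j = g j i) (hhs : ∀ i j, h i j = h j i)
  (hinv : ∀ a c, ∑ b, h a b * g b c = if a = c then 1 else 0)

include hgs hinv in
lemma contr_row (v : Fin 3 → ℝ) (i : Fin 3) :
    ∑ a, ∑ b, h a b * g i b * v a = v i := by
  have e : ∀ a, ∑ b, h a b * g i b * v a = (if a = i then 1 else 0) * v a := by
    intro a
    rw [← Finset.sum_mul, ← hinv a i]
    congr 1
    exact Finset.sum_congr rfl fun b _ => by rw [hgs i b]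
  simp only [e, ite_mul, one_mul, zero_mul, Finset.sum_ite_eq', Finset.mem_univ, if_true]

include hgs hhs hinv in
lemma contr_col (v : Fin 3 → ℝ) (j : Fin 3) :
    ∑ a, ∑ b, h a b * g a j * v b = v j := by
  rw [Finset.sum_comm]
  have e : ∀ b, ∑ a, h a b * g a j * v b = (if b = j then 1 else 0) * v b := by
    intro b
    rw [← Finset.sum_mul, ← hinv b j]
    congr 1
    exact Finset.sum_congr rfl fun a _ => by rw [hgs a j, hhs a b]
  simp only [e, ite_mul, one_mul, zero_mul, Finset.sum_ite_eq', Finset.mem_univ, if_true]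

include hgs hinv in
lemma trace3 (c : ℝ) : ∑ a : Fin 3, ∑ b : Fin 3, h a b * g a b * c = 3 * c := by
  have e : ∀ a : Fin 3, ∑ b, h a b * g a b * c = c := by
    intro a
    rw [← Finset.sum_mul]
    have : ∑ b, h a b * g a b = 1 := by
      rw [show (1:ℝ) = if a = a then 1 else 0 by simp, ← hinv a a]
      exact Finset.sum_congr rfl fun b _ => by rw [hgs a b]
    rw [this, one_mul]
  simp only [e]
  simp [Fin.sum_univ_three]; try ring

include hgs hinv in
lemma trace3' (c : ℝ) : ∑ a : Fin 3, ∑ b : Fin 3, h a b * (g a b * c) = 3 * c := by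
  have := trace3 g h hgs hinv c
  rw [← this]
  exact Finset.sum_congr rfl fun a _ => Finset.sum_congr rfl fun b _ => by ring

include hgs hhs hinv in
lemma muLam (w : Tensor 1 1) (I J : Fin 1 → Fin 3) :
    muOp h (lamOp g w) I J = (5/4) * w (fun _ => I 0) (fun _ => J 0)
      + (1/4) * g (I 0) (J 0) * (∑ a, ∑ b, h a b * w (fun _ => a) (fun _ => b)) := by
  simp only [muOp, lamOp_one_one, snoc0, snoc1]
  have key : ∀ a b : Fin 3,
      h a b * (1/4 * (g a b * w (fun _ => I 0) (fun _ => J 0)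
        + g (I 0) b * w (fun _ => a) (fun _ => J 0)
        + g a (J 0) * w (fun _ => I 0) (fun _ => b)
        + g (I 0) (J 0) * w (fun _ => a) (fun _ => b)))
      = 1/4 * (h a b * g a b * w (fun _ => I 0) (fun _ => J 0))
        + 1/4 * (h a b * g (I 0) b * w (fun _ => a) (fun _ => J 0))
        + 1/4 * (h a b * g a (J 0) * w (fun _ => I 0) (fun _ => b))
        + 1/4 * (g (I 0) (J 0) * (h a b * w (fun _ => a) (fun _ => b))) := fun a b => by ring
  simp only [key, Finset.sum_add_distrib, ← Finset.mul_sum]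
  have S1 : ∑ a : Fin 3, ∑ b : Fin 3, h a b * g a b * w (fun _ => I 0) (fun _ => J 0)
      = 3 * w (fun _ => I 0) (fun _ => J 0) := trace3 g h hgs hinv _
  have S2 : ∑ a : Fin 3, ∑ b : Fin 3, h a b * g (I 0) b * w (fun _ => a) (fun _ => J 0)
      = w (fun _ => I 0) (fun _ => J 0) :=
    contr_row g h hgs hinv (fun a => w (fun _ => a) (fun _ => J 0)) (I 0)
  have S3 : ∑ a : Fin 3, ∑ b : Fin 3, h a b * g a (J 0) * w (fun _ => I 0) (fun _ => b)
      = w (fun _ => I 0) (fun _ => J 0) :=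
    contr_col g h hgs hhs hinv (fun b => w (fun _ => I 0) (fun _ => b)) (J 0)
  rw [S1, S2, S3]
  ring
end contr


/-- for `k = ℓ = 2` tensors on a 3-dimensional inner product space, the projection
onto trace-free tensors is `B f = f − λ (A f)`, where
`A f = (1/a₁) μf − (b₁/(a₁a₂)) λ μ² f` with `a₁ = 5/4`, `a₂ = 2`, `b₁ = 1/4`
(`a_K = K(k+ℓ+2−K)/(kℓ)`, `b_K = (k−K)(ℓ−K)/(kℓ)` for `k = ℓ = 2`), `B f` lies in the kernel
of μ, and `f − B f` lies in the image of λ. -/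
theorem trace_free_projection_two_two (g : Matrix (Fin 3) (Fin 3) ℝ) (hg : g.PosDef)
    (f : Tensor 2 2) (hf : IsSym f) :
    let a₁ : ℝ := 5 / 4
    let a₂ : ℝ := 2
    let b₁ : ℝ := 1 / 4
    let Af : Tensor 1 1 := fun I J =>
      (1 / a₁) * muOp g⁻¹ f I J - (b₁ / (a₁ * a₂)) * lamOp g (muOp g⁻¹ (muOp g⁻¹ f)) I J
    muOp g⁻¹ (fun I J => f I J - lamOp g Af I J) = 0
    ∧ ∃ w : Tensor 1 1,
        (fun I J => f I J - (f I J - lamOp g Af I J)) = lamOp g w := by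
  intro a₁ a₂ b₁ Af
  have hgs : ∀ i j, g i j = g j i := fun i j => (Matrix.IsHermitian.apply hg.isHermitian i j).symm
  have hhs : ∀ i j, g⁻¹ i j = g⁻¹ j i :=
    fun i j => (Matrix.IsHermitian.apply hg.isHermitian.inv i j).symm
  have hinv : ∀ a c, ∑ b, g⁻¹ a b * g b c = if a = c then 1 else 0 := by
    intro a c
    have h1 : g⁻¹ * g = 1 := Matrix.nonsing_inv_mul g (isUnit_iff_ne_zero.mpr hg.det_pos.ne')
    have := congrFun (congrFun h1 a) c
    rwa [Matrix.mul_apply, Matrix.one_apply] at this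
  have hAf : ∀ I J, Af I J = 4/5 * muOp g⁻¹ f I J
      - 1/10 * lamOp g (muOp g⁻¹ (muOp g⁻¹ f)) I J := by
    intro I J
    show (1/(5/4) : ℝ) * _ - ((1/4 : ℝ)/(5/4 * 2)) * _ = _
    norm_num
  refine ⟨?_, Af, by funext I J; ring⟩
  funext I J
  have hdiff : muOp g⁻¹ (fun I J => f I J - lamOp g Af I J) I J
      = muOp g⁻¹ f I J - muOp g⁻¹ (lamOp g Af) I J := by
    simp only [muOp, mul_sub, Finset.sum_sub_distrib]
  have hI : (fun _ => I 0 : Fin 1 → Fin 3) = I := by funext x; fin_cases x; rfl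
  have hJ : (fun _ => J 0 : Fin 1 → Fin 3) = J := by funext x; fin_cases x; rfl
  set C : ℝ := muOp g⁻¹ (muOp g⁻¹ f) (fun x => x.elim0) (fun x => x.elim0) with hCdef
  have hC : C = ∑ a, ∑ b, g⁻¹ a b * muOp g⁻¹ f (fun _ => a) (fun _ => b) := by
    rw [hCdef]
    show (∑ a, ∑ b, g⁻¹ a b * muOp g⁻¹ f (Fin.snoc (fun x => x.elim0) a)
      (Fin.snoc (fun x => x.elim0) b)) = _
    simp only [snoc_emp]
  have hT : (∑ a, ∑ b, g⁻¹ a b * Af (fun _ => a) (fun _ => b)) = 1/2 * C := by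
    simp only [hAf, lamOp_zero]
    have e : ∀ a b : Fin 3, g⁻¹ a b * (4/5 * muOp g⁻¹ f (fun _ => a) (fun _ => b)
        - 1/10 * (g a b * C))
        = 4/5 * (g⁻¹ a b * muOp g⁻¹ f (fun _ => a) (fun _ => b))
          - 1/10 * (g⁻¹ a b * (g a b * C)) := fun a b => by ring
    rw [← hCdef]
    simp only [e, Finset.sum_sub_distrib, ← Finset.mul_sum]
    rw [← hC, trace3' g g⁻¹ hgs hinv]
    ring
  rw [Pi.zero_apply, Pi.zero_apply, hdiff, muLam g g⁻¹ hgs hhs hinv Af I J, hT, hI, hJ,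
    hAf I J, lamOp_zero]
  rw [← hCdef]
  ring
end
end

section
/- The principal symbol of the operator Δ^B = δ^B d^B acting on trace-free 2+1 tensors (symmetric in the first two indices, trace-free) satisfies the ellipticity estimate ⟨−σ(Δ^B)(ξ) u, u⟩ ≥ (1/10)|ξ|²_g ⟨u, u⟩ for all u, where −σ(Δ^B)u has components (1/2)(u_{i1 i2 j1}|ξ|²_g + u_{i1 i2 h} ξ^h ξ_{j1}) − (1/10)(u_{r i2 j1} ξ^r ξ_{i1} + u_{r i1 j1} ξ^r ξ_{i2} + g_{i1 j1} ξ^r ξ^h u_{r i2 h} + g_{i2 j1} ξ^r ξ^h u_{r i1 h}). -/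
open Matrix BigOperators

lemma sum_sq_expand {ι κ : Type*} [Fintype ι] [Fintype κ] (L : κ → ι → ℝ) (x : ι → ℝ) :
    ∑ p, ∑ q, (∑ a, L a p * L a q) * x p * x q = ∑ a, (∑ p, L a p * x p) ^ 2 := by
  have h1 : ∀ p q, (∑ a, L a p * L a q) * x p * x q = ∑ a, (L a p * x p) * (L a q * x q) := by
    intro p q; rw [Finset.sum_mul, Finset.sum_mul]
    exact Finset.sum_congr rfl fun a _ => by ring
  simp only [h1]
  rw [show (∑ p, ∑ q, ∑ a, (L a p * x p) * (L a q * x q))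
      = ∑ p, ∑ a, ∑ q, (L a p * x p) * (L a q * x q) from
    Finset.sum_congr rfl fun p _ => Finset.sum_comm, Finset.sum_comm]
  refine Finset.sum_congr rfl fun a _ => ?_
  rw [sq, Finset.sum_mul_sum]

lemma triple_sum_mul (f g h : Fin 3 → ℝ) :
    (∑ a, f a) * (∑ b, g b) * (∑ c, h c) = ∑ a, ∑ b, ∑ c, f a * g b * h c := by
  rw [Finset.sum_mul_sum, Finset.sum_mul]
  refine Finset.sum_congr rfl fun a _ => ?_
  rw [Finset.sum_mul_sum]

lemma quad2_nonneg (A B : Matrix (Fin 3) (Fin 3) ℝ)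
    (hA : ∃ L : Matrix (Fin 3) (Fin 3) ℝ, ∀ i j, A i j = ∑ a, L a i * L a j)
    (hB : ∃ L : Matrix (Fin 3) (Fin 3) ℝ, ∀ i j, B i j = ∑ a, L a i * L a j)
    (x : Fin 3 → Fin 3 → ℝ) :
    0 ≤ ∑ i, ∑ j, ∑ i', ∑ j', A i i' * B j j' * x i j * x i' j' := by
  obtain ⟨L, hL⟩ := hA; obtain ⟨M, hM⟩ := hB
  have key := sum_sq_expand (ι := Fin 3 × Fin 3) (κ := Fin 3 × Fin 3)
    (fun a p => L a.1 p.1 * M a.2 p.2) (fun p => x p.1 p.2)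
  have e : (∑ p : Fin 3 × Fin 3, ∑ q : Fin 3 × Fin 3,
      (∑ a : Fin 3 × Fin 3, (L a.1 p.1 * M a.2 p.2) * (L a.1 q.1 * M a.2 q.2))
        * x p.1 p.2 * x q.1 q.2)
      = ∑ i, ∑ j, ∑ i', ∑ j', A i i' * B j j' * x i j * x i' j' := by
    simp only [Fintype.sum_prod_type]
    refine Finset.sum_congr rfl fun i _ => Finset.sum_congr rfl fun j _ =>
      Finset.sum_congr rfl fun i' _ => Finset.sum_congr rfl fun j' _ => ?_
    rw [hL, hM, show (∑ a1, L a1 i * L a1 i') * (∑ a2, M a2 j * M a2 j')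
        = ∑ a1, ∑ a2, (L a1 i * M a2 j) * (L a1 i' * M a2 j') from by
      rw [Finset.sum_mul_sum]
      exact Finset.sum_congr rfl fun _ _ => Finset.sum_congr rfl fun _ _ => by ring]
  rw [← e, key]
  exact Finset.sum_nonneg fun _ _ => sq_nonneg _

lemma quad3_nonneg (A B C : Matrix (Fin 3) (Fin 3) ℝ)
    (hA : ∃ L : Matrix (Fin 3) (Fin 3) ℝ, ∀ i j, A i j = ∑ a, L a i * L a j)
    (hB : ∃ L : Matrix (Fin 3) (Fin 3) ℝ, ∀ i j, B i j = ∑ a, L a i * L a j)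
    (hC : ∃ L : Matrix (Fin 3) (Fin 3) ℝ, ∀ i j, C i j = ∑ a, L a i * L a j)
    (x : Fin 3 → Fin 3 → Fin 3 → ℝ) :
    0 ≤ ∑ i, ∑ j, ∑ k, ∑ i', ∑ j', ∑ k',
        A i i' * B j j' * C k k' * x i j k * x i' j' k' := by
  obtain ⟨L, hL⟩ := hA; obtain ⟨M, hM⟩ := hB; obtain ⟨N, hN⟩ := hC
  have key := sum_sq_expand (ι := Fin 3 × Fin 3 × Fin 3) (κ := Fin 3 × Fin 3 × Fin 3)
    (fun a p => L a.1 p.1 * M a.2.1 p.2.1 * N a.2.2 p.2.2) (fun p => x p.1 p.2.1 p.2.2)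
  have e : (∑ p : Fin 3 × Fin 3 × Fin 3, ∑ q : Fin 3 × Fin 3 × Fin 3,
      (∑ a : Fin 3 × Fin 3 × Fin 3,
        (L a.1 p.1 * M a.2.1 p.2.1 * N a.2.2 p.2.2) * (L a.1 q.1 * M a.2.1 q.2.1 * N a.2.2 q.2.2))
        * x p.1 p.2.1 p.2.2 * x q.1 q.2.1 q.2.2)
      = ∑ i, ∑ j, ∑ k, ∑ i', ∑ j', ∑ k',
          A i i' * B j j' * C k k' * x i j k * x i' j' k' := by
    simp only [Fintype.sum_prod_type]
    refine Finset.sum_congr rfl fun i _ => Finset.sum_congr rfl fun j _ =>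
      Finset.sum_congr rfl fun k _ => Finset.sum_congr rfl fun i' _ =>
      Finset.sum_congr rfl fun j' _ => Finset.sum_congr rfl fun k' _ => ?_
    rw [hL, hM, hN, triple_sum_mul]
    rw [show (∑ a1, ∑ a2, ∑ a3, (L a1 i * L a1 i') * (M a2 j * M a2 j') * (N a3 k * N a3 k'))
        = ∑ a1, ∑ a2, ∑ a3,
            (L a1 i * M a2 j * N a3 k) * (L a1 i' * M a2 j' * N a3 k') from
      Finset.sum_congr rfl fun _ _ => Finset.sum_congr rfl fun _ _ =>
        Finset.sum_congr rfl fun _ _ => by ring]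
  rw [← e, key]
  exact Finset.sum_nonneg fun _ _ => sq_nonneg _

lemma psd_decomp {A : Matrix (Fin 3) (Fin 3) ℝ} (hA : A.PosSemidef) :
    ∃ L : Matrix (Fin 3) (Fin 3) ℝ, ∀ i j, A i j = ∑ a, L a i * L a j := by
  obtain ⟨B, hB⟩ : ∃ B : Matrix (Fin 3) (Fin 3) ℝ, A = Bᴴ * B := by
    open MatrixOrder in
    exact ⟨CFC.sqrt A, by
      rw [(CFC.sqrt_nonneg A).posSemidef.1.eq, CFC.sqrt_mul_sqrt_self A hA.nonneg]⟩
  exact ⟨B, fun i j => by rw [hB]; simp [Matrix.mul_apply, Matrix.conjTranspose_apply]⟩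

noncomputable section

set_option maxHeartbeats 4000000 in
/-- the principal symbol of `Δ^B = δ^B d^B` acting on trace-free 2+1 tensors
(symmetric in the first two indices, trace-free) satisfies the ellipticity estimate
`⟨−σ(Δ^B)(ξ) u, u⟩ ≥ (1/10)|ξ|²_g ⟨u, u⟩`, where `−σ(Δ^B)u` has the stated components. -/
theorem elliptic_estimate_principal_symbol (g : Matrix (Fin 3) (Fin 3) ℝ) (hg : g.PosDef)
    (ξ : Fin 3 → ℝ) (hξ : ξ ≠ 0)
    (u : Fin 3 → Fin 3 → Fin 3 → ℝ)
    (husym : ∀ i1 i2 j1, u i1 i2 j1 = u i2 i1 j1)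
    (htf : ∀ i1, ∑ i2, ∑ j1, g⁻¹ i2 j1 * u i1 i2 j1 = 0) :
    let xiUp : Fin 3 → ℝ := fun i => ∑ j, g⁻¹ i j * ξ j
    let nsq : ℝ := ∑ i, ξ i * xiUp i
    let negσ : Fin 3 → Fin 3 → Fin 3 → ℝ := fun i1 i2 j1 =>
      (1 / 2) * (u i1 i2 j1 * nsq + (∑ h, u i1 i2 h * xiUp h) * ξ j1)
      - (1 / 10) * ((∑ r, u r i2 j1 * xiUp r) * ξ i1 + (∑ r, u r i1 j1 * xiUp r) * ξ i2
          + g i1 j1 * (∑ r, ∑ h, xiUp r * xiUp h * u r i2 h)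
          + g i2 j1 * (∑ r, ∑ h, xiUp r * xiUp h * u r i1 h))
    let ip : (Fin 3 → Fin 3 → Fin 3 → ℝ) → (Fin 3 → Fin 3 → Fin 3 → ℝ) → ℝ := fun v w =>
      ∑ i1, ∑ i2, ∑ j1, ∑ i1', ∑ i2', ∑ j1',
        g⁻¹ i1 i1' * g⁻¹ i2 i2' * g⁻¹ j1 j1' * v i1 i2 j1 * w i1' i2' j1'
    ip negσ u ≥ (1 / 10) * nsq * ip u u := by
  intro xiUp nsq negσ ip
  have hip : ∀ p q, ip p q = ∑ i1, ∑ i2, ∑ j1, ∑ i1', ∑ i2', ∑ j1',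
      g⁻¹ i1 i1' * g⁻¹ i2 i2' * g⁻¹ j1 j1' * p i1 i2 j1 * q i1' i2' j1' := fun _ _ => rfl
  have hxiUp : ∀ i, xiUp i = ∑ j, g⁻¹ i j * ξ j := fun _ => rfl
  have hnegσ : ∀ a b c, negσ a b c =
      (1 / 2) * (u a b c * nsq + (∑ h, u a b h * xiUp h) * ξ c)
      - (1 / 10) * ((∑ r, u r b c * xiUp r) * ξ a + (∑ r, u r a c * xiUp r) * ξ b
          + g a c * (∑ r, ∑ h, xiUp r * xiUp h * u r b h)
          + g b c * (∑ r, ∑ h, xiUp r * xiUp h * u r a h)) := fun _ _ _ => rfl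
  -- basic facts about g and g⁻¹
  have hdet : IsUnit g.det := hg.det_pos.ne'.isUnit
  have hGsym : ∀ i j, g⁻¹ i j = g⁻¹ j i := by
    intro i j
    have h := hg.inv.isHermitian
    conv_lhs => rw [← h]
    simp [Matrix.conjTranspose_apply]
  have hGg : ∀ a b, (∑ k, g⁻¹ a k * g k b) = if a = b then (1:ℝ) else 0 := by
    intro a b
    have h := Matrix.nonsing_inv_mul g hdet
    have := congrFun (congrFun h a) b
    rw [Matrix.mul_apply] at this
    rw [this, Matrix.one_apply]
  have hGgG : ∀ a b, (∑ i, ∑ j, g⁻¹ i a * g i j * g⁻¹ j b) = g⁻¹ a b := by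
    intro a b
    have : ∀ i j, g⁻¹ i a * g i j * g⁻¹ j b = g⁻¹ a i * g i j * g⁻¹ j b := by
      intro i j; rw [hGsym i a]
    simp only [this]
    rw [Finset.sum_comm]
    have : ∀ j, (∑ i, g⁻¹ a i * g i j * g⁻¹ j b) = (∑ i, g⁻¹ a i * g i j) * g⁻¹ j b := by
      intro j; rw [Finset.sum_mul]
    simp only [this, hGg]
    simp [Finset.sum_ite_eq, Finset.mul_sum]
  have hξup' : ∀ j', (∑ j, g⁻¹ j j' * ξ j) = xiUp j' := by
    intro j'; rw [hxiUp]
    exact Finset.sum_congr rfl fun j _ => by rw [hGsym j j']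
  have htrace' : ∀ b, (∑ a, ∑ c, g⁻¹ a c * u a b c) = 0 := by
    intro b
    have : ∀ a c, g⁻¹ a c * u a b c = g⁻¹ a c * u b a c := by
      intro a c; rw [husym a b c]
    simp only [this]
    exact htf b
  -- contractions
  obtain ⟨v, hv⟩ : ∃ v : Fin 3 → Fin 3 → ℝ, ∀ a b, (∑ h, u a b h * xiUp h) = v a b :=
    ⟨_, fun _ _ => rfl⟩
  obtain ⟨w, hw⟩ : ∃ w : Fin 3 → Fin 3 → ℝ, ∀ a b, (∑ r, u r a b * xiUp r) = w a b :=
    ⟨_, fun _ _ => rfl⟩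
  obtain ⟨c2, hc2⟩ : ∃ c2 : Fin 3 → ℝ, ∀ b, (∑ r, ∑ h, xiUp r * xiUp h * u r b h) = c2 b :=
    ⟨_, fun _ => rfl⟩
  have hv2 : ∀ a b, (∑ h, xiUp h * u a b h) = v a b := by
    intro a b; rw [← hv]; exact Finset.sum_congr rfl fun _ _ => mul_comm _ _
  have hw2 : ∀ a b, (∑ r, xiUp r * u r a b) = w a b := by
    intro a b; rw [← hw]; exact Finset.sum_congr rfl fun _ _ => mul_comm _ _
  have hw3 : ∀ a b, (∑ c, xiUp c * u a c b) = w a b := by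
    intro a b; rw [← hw2]
    exact Finset.sum_congr rfl fun c _ => by rw [husym a c b]
  -- split ip negσ u into six pieces
  have hsplit : ip negσ u =
      (∑ i1, ∑ i2, ∑ j1, ∑ i1', ∑ i2', ∑ j1',
        1 / 2 * (g⁻¹ i1 i1' * g⁻¹ i2 i2' * g⁻¹ j1 j1' * u i1 i2 j1 * u i1' i2' j1') * nsq)
      + (∑ i1, ∑ i2, ∑ j1, ∑ i1', ∑ i2', ∑ j1',
        1 / 2 * (g⁻¹ i1 i1' * g⁻¹ i2 i2' * g⁻¹ j1 j1' * (v i1 i2 * ξ j1) * u i1' i2' j1'))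
      + (∑ i1, ∑ i2, ∑ j1, ∑ i1', ∑ i2', ∑ j1',
        -(1 / 10) * (g⁻¹ i1 i1' * g⁻¹ i2 i2' * g⁻¹ j1 j1' * (w i2 j1 * ξ i1) * u i1' i2' j1'))
      + (∑ i1, ∑ i2, ∑ j1, ∑ i1', ∑ i2', ∑ j1',
        -(1 / 10) * (g⁻¹ i1 i1' * g⁻¹ i2 i2' * g⁻¹ j1 j1' * (w i1 j1 * ξ i2) * u i1' i2' j1'))
      + (∑ i1, ∑ i2, ∑ j1, ∑ i1', ∑ i2', ∑ j1',
        -(1 / 10) * (g⁻¹ i1 i1' * g⁻¹ i2 i2' * g⁻¹ j1 j1' * (g i1 j1 * c2 i2) * u i1' i2' j1'))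
      + (∑ i1, ∑ i2, ∑ j1, ∑ i1', ∑ i2', ∑ j1',
        -(1 / 10) * (g⁻¹ i1 i1' * g⁻¹ i2 i2' * g⁻¹ j1 j1' * (g i2 j1 * c2 i1) * u i1' i2' j1')) := by
    rw [hip]
    rw [show (∑ i1, ∑ i2, ∑ j1, ∑ i1', ∑ i2', ∑ j1',
        g⁻¹ i1 i1' * g⁻¹ i2 i2' * g⁻¹ j1 j1' * negσ i1 i2 j1 * u i1' i2' j1')
      = ∑ i1, ∑ i2, ∑ j1, ∑ i1', ∑ i2', ∑ j1',
        (1 / 2 * (g⁻¹ i1 i1' * g⁻¹ i2 i2' * g⁻¹ j1 j1' * u i1 i2 j1 * u i1' i2' j1') * nsq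
        + 1 / 2 * (g⁻¹ i1 i1' * g⁻¹ i2 i2' * g⁻¹ j1 j1' * (v i1 i2 * ξ j1) * u i1' i2' j1')
        + -(1 / 10) * (g⁻¹ i1 i1' * g⁻¹ i2 i2' * g⁻¹ j1 j1' * (w i2 j1 * ξ i1) * u i1' i2' j1')
        + -(1 / 10) * (g⁻¹ i1 i1' * g⁻¹ i2 i2' * g⁻¹ j1 j1' * (w i1 j1 * ξ i2) * u i1' i2' j1')
        + -(1 / 10) * (g⁻¹ i1 i1' * g⁻¹ i2 i2' * g⁻¹ j1 j1' * (g i1 j1 * c2 i2) * u i1' i2' j1')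
        + -(1 / 10) * (g⁻¹ i1 i1' * g⁻¹ i2 i2' * g⁻¹ j1 j1' * (g i2 j1 * c2 i1) * u i1' i2' j1')) from
      Finset.sum_congr rfl fun i1 _ => Finset.sum_congr rfl fun i2 _ =>
      Finset.sum_congr rfl fun j1 _ => Finset.sum_congr rfl fun i1' _ =>
      Finset.sum_congr rfl fun i2' _ => Finset.sum_congr rfl fun j1' _ => by
        rw [hnegσ i1 i2 j1]
        simp only [hv, hw, hc2]
        ring]
    simp only [Finset.sum_add_distrib]
  -- closed forms for each piece
  have C1 : (∑ i1, ∑ i2, ∑ j1, ∑ i1', ∑ i2', ∑ j1',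
        1 / 2 * (g⁻¹ i1 i1' * g⁻¹ i2 i2' * g⁻¹ j1 j1' * u i1 i2 j1 * u i1' i2' j1') * nsq)
      = 1 / 2 * nsq * ip u u := by
    rw [hip]
    simp only [Fin.sum_univ_three]
    ring
  have C2 : (∑ i1, ∑ i2, ∑ j1, ∑ i1', ∑ i2', ∑ j1',
        1 / 2 * (g⁻¹ i1 i1' * g⁻¹ i2 i2' * g⁻¹ j1 j1' * (v i1 i2 * ξ j1) * u i1' i2' j1'))
      = 1 / 2 * ∑ a, ∑ b, ∑ a', ∑ b', g⁻¹ a a' * g⁻¹ b b' * v a b *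
          (∑ r', (∑ r, g⁻¹ r r' * ξ r) * u a' b' r') := by
    simp only [Fin.sum_univ_three]
    ring
  have C3 : (∑ i1, ∑ i2, ∑ j1, ∑ i1', ∑ i2', ∑ j1',
        -(1 / 10) * (g⁻¹ i1 i1' * g⁻¹ i2 i2' * g⁻¹ j1 j1' * (w i2 j1 * ξ i1) * u i1' i2' j1'))
      = -(1 / 10) * ∑ a, ∑ b, ∑ a', ∑ b', g⁻¹ a a' * g⁻¹ b b' * w a b *
          (∑ r', (∑ r, g⁻¹ r r' * ξ r) * u r' a' b') := by
    simp only [Fin.sum_univ_three]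
    ring
  have C4 : (∑ i1, ∑ i2, ∑ j1, ∑ i1', ∑ i2', ∑ j1',
        -(1 / 10) * (g⁻¹ i1 i1' * g⁻¹ i2 i2' * g⁻¹ j1 j1' * (w i1 j1 * ξ i2) * u i1' i2' j1'))
      = -(1 / 10) * ∑ a, ∑ b, ∑ a', ∑ b', g⁻¹ a a' * g⁻¹ b b' * w a b *
          (∑ r', (∑ r, g⁻¹ r r' * ξ r) * u a' r' b') := by
    simp only [Fin.sum_univ_three]
    ring
  have C5 : (∑ i1, ∑ i2, ∑ j1, ∑ i1', ∑ i2', ∑ j1',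
        -(1 / 10) * (g⁻¹ i1 i1' * g⁻¹ i2 i2' * g⁻¹ j1 j1' * (g i1 j1 * c2 i2) * u i1' i2' j1'))
      = -(1 / 10) * ∑ a, ∑ a', g⁻¹ a a' * c2 a *
          (∑ b', ∑ c', (∑ b, ∑ c, g⁻¹ b b' * g b c * g⁻¹ c c') * u b' a' c') := by
    simp only [Fin.sum_univ_three]
    ring
  have C6 : (∑ i1, ∑ i2, ∑ j1, ∑ i1', ∑ i2', ∑ j1',
        -(1 / 10) * (g⁻¹ i1 i1' * g⁻¹ i2 i2' * g⁻¹ j1 j1' * (g i2 j1 * c2 i1) * u i1' i2' j1'))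
      = -(1 / 10) * ∑ a, ∑ a', g⁻¹ a a' * c2 a *
          (∑ b', ∑ c', (∑ b, ∑ c, g⁻¹ b b' * g b c * g⁻¹ c c') * u a' b' c') := by
    simp only [Fin.sum_univ_three]
    ring
  -- reduce the auxiliary expressions
  have R2 : (∑ a, ∑ b, ∑ a', ∑ b', g⁻¹ a a' * g⁻¹ b b' * v a b *
          (∑ r', (∑ r, g⁻¹ r r' * ξ r) * u a' b' r'))
      = ∑ a, ∑ b, ∑ a', ∑ b', g⁻¹ a a' * g⁻¹ b b' * v a b * v a' b' := by
    simp only [hξup', hv2]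
  have R3 : (∑ a, ∑ b, ∑ a', ∑ b', g⁻¹ a a' * g⁻¹ b b' * w a b *
          (∑ r', (∑ r, g⁻¹ r r' * ξ r) * u r' a' b'))
      = ∑ a, ∑ b, ∑ a', ∑ b', g⁻¹ a a' * g⁻¹ b b' * w a b * w a' b' := by
    simp only [hξup', hw2]
  have R4 : (∑ a, ∑ b, ∑ a', ∑ b', g⁻¹ a a' * g⁻¹ b b' * w a b *
          (∑ r', (∑ r, g⁻¹ r r' * ξ r) * u a' r' b'))
      = ∑ a, ∑ b, ∑ a', ∑ b', g⁻¹ a a' * g⁻¹ b b' * w a b * w a' b' := by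
    simp only [hξup', hw3]
  have R5 : (∑ a, ∑ a', g⁻¹ a a' * c2 a *
          (∑ b', ∑ c', (∑ b, ∑ c, g⁻¹ b b' * g b c * g⁻¹ c c') * u b' a' c')) = 0 := by
    simp only [hGgG, htrace', mul_zero, Finset.sum_const_zero]
  have R6 : (∑ a, ∑ a', g⁻¹ a a' * c2 a *
          (∑ b', ∑ c', (∑ b, ∑ c, g⁻¹ b b' * g b c * g⁻¹ c c') * u a' b' c')) = 0 := by
    simp only [hGgG, htf, mul_zero, Finset.sum_const_zero]
  have hfin : ip negσ u = 1 / 2 * nsq * ip u u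
      + 1 / 2 * (∑ a, ∑ b, ∑ a', ∑ b', g⁻¹ a a' * g⁻¹ b b' * v a b * v a' b')
      - 1 / 10 * (∑ a, ∑ b, ∑ a', ∑ b', g⁻¹ a a' * g⁻¹ b b' * w a b * w a' b')
      - 1 / 10 * (∑ a, ∑ b, ∑ a', ∑ b', g⁻¹ a a' * g⁻¹ b b' * w a b * w a' b') := by
    rw [hsplit, C1, C2, C3, C4, C5, C6, R2, R3, R4, R5, R6]
    ring
  -- nonnegativity facts
  obtain ⟨L0, hL0⟩ := psd_decomp hg.inv.posSemidef
  have hSnn : 0 ≤ ip u u := by rw [hip]; exact quad3_nonneg _ _ _ ⟨L0, hL0⟩ ⟨L0, hL0⟩ ⟨L0, hL0⟩ u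
  have hVnn : 0 ≤ ∑ a, ∑ b, ∑ a', ∑ b', g⁻¹ a a' * g⁻¹ b b' * v a b * v a' b' :=
    quad2_nonneg _ _ ⟨L0, hL0⟩ ⟨L0, hL0⟩ v
  have hWnn : 0 ≤ ∑ a, ∑ b, ∑ a', ∑ b', g⁻¹ a a' * g⁻¹ b b' * w a b * w a' b' :=
    quad2_nonneg _ _ ⟨L0, hL0⟩ ⟨L0, hL0⟩ w
  -- the Cauchy–Schwarz matrix nsq • g⁻¹ - xiUp ⊗ xiUp
  obtain ⟨Mm, hMm⟩ : ∃ M : Matrix (Fin 3) (Fin 3) ℝ,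
      ∀ r r', M r r' = nsq * g⁻¹ r r' - xiUp r * xiUp r' := ⟨_, fun _ _ => rfl⟩
  have hnsqL : nsq = ∑ a, (∑ i, L0 a i * ξ i) ^ 2 := by
    show (∑ i, ξ i * xiUp i) = _
    simp only [hxiUp, hL0]
    simp only [Fin.sum_univ_three]
    ring
  have hMmPSD : Mm.PosSemidef := by
    refine Matrix.PosSemidef.of_dotProduct_mulVec_nonneg ?_ ?_
    · show Mmᴴ = Mm
      ext i j
      simp only [Matrix.conjTranspose_apply, star_trivial, hMm, hGsym j i]
      rw [mul_comm (xiUp j) (xiUp i)]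
    · intro x
      have hsx : star x = x := by simp
      have hdot : dotProduct (star x) (Mm *ᵥ x) = ∑ i, x i * ∑ j, Mm i j * x j := by
        rw [hsx]; simp [dotProduct, Matrix.mulVec]
      have e3 : (∑ i, x i * ∑ j, Mm i j * x j)
          = nsq * (∑ a, (∑ i, L0 a i * x i) ^ 2)
            - (∑ a, (∑ i, L0 a i * ξ i) * (∑ i, L0 a i * x i)) ^ 2 := by
        simp only [hMm, hxiUp, hL0]
        simp only [Fin.sum_univ_three]
        ring
      have cs := Finset.sum_mul_sq_le_sq_mul_sq Finset.univ
        (fun a => ∑ i, L0 a i * ξ i) (fun a => ∑ i, L0 a i * x i)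
      rw [hdot, e3, ← hnsqL] at *
      linarith [cs]
  obtain ⟨P, hP⟩ := psd_decomp hMmPSD
  have hQ := quad3_nonneg Mm g⁻¹ g⁻¹ ⟨P, hP⟩ ⟨L0, hL0⟩ ⟨L0, hL0⟩ u
  have hdiff : (∑ i, ∑ j, ∑ k, ∑ i', ∑ j', ∑ k',
        Mm i i' * g⁻¹ j j' * g⁻¹ k k' * u i j k * u i' j' k')
      = nsq * ip u u
        - ∑ a, ∑ b, ∑ a', ∑ b', g⁻¹ a a' * g⁻¹ b b' * w a b * w a' b' := by
    rw [hip]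
    simp only [hMm, ← hw]
    simp only [Fin.sum_univ_three]
    ring
  rw [hdiff] at hQ
  rw [ge_iff_le, hfin]
  linarith [hSnn, hVnn, hWnn, hQ]
end
end

section
/- Decompose each of the three nonnegative quadratic forms: for any trace-free tensor u (symmetric in first two indices) and ξ ≠ 0, the operators p₁(ξ)u = u_{i1 i2 h} ξ^h ξ_{j1}, p₂(ξ)u = |ξ|²_g u_{i1 i2 j1} − u_{i1 i2 h} ξ^h ξ_{j1}, p₃(ξ)u = |ξ|²_g u_{i1 i2 j1} − g_{i2 j1} ξ^r ξ^h u_{r i1 h} are all positive semidefinite: ⟨p_α(ξ)u, u⟩ ≥ 0 for α = 1, 2, 3. -/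
open Matrix BigOperators

noncomputable section

set_option maxHeartbeats 0

private lemma L1s (C S : Matrix (Fin 3) (Fin 3) ℝ)
    (hCS : ∀ i j, C i j = ∑ c, S c i * S c j) (y : Fin 3 → ℝ) :
    ∑ k, ∑ k', C k k' * y k * y k' = ∑ c, (∑ k, S c k * y k) ^ 2 := by
  simp only [hCS, Fin.sum_univ_three]; ring

private lemma L2d (G B S : Matrix (Fin 3) (Fin 3) ℝ)
    (hGS : ∀ i j, G i j = ∑ c, S c i * S c j) (v : Fin 3 → Fin 3 → ℝ) :
    ∑ i, ∑ j, ∑ i', ∑ j', G i i' * B j j' * v i j * v i' j'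
      = ∑ a, ∑ j, ∑ j', B j j' * (∑ i, S a i * v i j) * (∑ i', S a i' * v i' j') := by
  simp only [hGS, Fin.sum_univ_three]; ring

private lemma L2 (B C S : Matrix (Fin 3) (Fin 3) ℝ)
    (hBS : ∀ i j, B i j = ∑ c, S c i * S c j) (s : Fin 3 → Fin 3 → ℝ) :
    ∑ j, ∑ k, ∑ j', ∑ k', B j j' * C k k' * s j k * s j' k'
      = ∑ b, ∑ k, ∑ k', C k k' * (∑ j, S b j * s j k) * (∑ j', S b j' * s j' k') := by
  simp only [hBS, Fin.sum_univ_three]; ring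

private lemma L3 (G B C S : Matrix (Fin 3) (Fin 3) ℝ)
    (hGS : ∀ i j, G i j = ∑ c, S c i * S c j)
    (t : Fin 3 → Fin 3 → Fin 3 → ℝ) :
    ∑ i, ∑ j, ∑ k, ∑ i', ∑ j', ∑ k',
      G i i' * B j j' * C k k' * t i j k * t i' j' k'
    = ∑ a, ∑ j, ∑ k, ∑ j', ∑ k',
      B j j' * C k k' * (∑ i, S a i * t i j k) * (∑ i', S a i' * t i' j' k') := by
  simp only [hGS, Fin.sum_univ_three]
  ring

/-- for any trace-free tensor `u` (symmetric in the first two indices) and `ξ ≠ 0`,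
the operators `p₁(ξ)u = u_{i1 i2 h} ξ^h ξ_{j1}`,
`p₂(ξ)u = |ξ|²_g u_{i1 i2 j1} − u_{i1 i2 h} ξ^h ξ_{j1}`,
`p₃(ξ)u = |ξ|²_g u_{i1 i2 j1} − g_{i2 j1} ξ^r ξ^h u_{r i1 h}` are all positive semidefinite:
`⟨p_α(ξ)u, u⟩ ≥ 0` for `α = 1, 2, 3`. -/
theorem p_operators_nonneg (g : Matrix (Fin 3) (Fin 3) ℝ) (hg : g.PosDef)
    (ξ : Fin 3 → ℝ) (hξ : ξ ≠ 0)
    (u : Fin 3 → Fin 3 → Fin 3 → ℝ)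
    (husym : ∀ i1 i2 j1, u i1 i2 j1 = u i2 i1 j1)
    (htf : ∀ i1, ∑ i2, ∑ j1, g⁻¹ i2 j1 * u i1 i2 j1 = 0) :
    let xiUp : Fin 3 → ℝ := fun i => ∑ j, g⁻¹ i j * ξ j
    let nsq : ℝ := ∑ i, ξ i * xiUp i
    let p1 : Fin 3 → Fin 3 → Fin 3 → ℝ := fun i1 i2 j1 =>
      (∑ h, u i1 i2 h * xiUp h) * ξ j1
    let p2 : Fin 3 → Fin 3 → Fin 3 → ℝ := fun i1 i2 j1 =>
      nsq * u i1 i2 j1 - (∑ h, u i1 i2 h * xiUp h) * ξ j1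
    let p3 : Fin 3 → Fin 3 → Fin 3 → ℝ := fun i1 i2 j1 =>
      nsq * u i1 i2 j1 - g i2 j1 * (∑ r, ∑ h, xiUp r * xiUp h * u r i1 h)
    let ip : (Fin 3 → Fin 3 → Fin 3 → ℝ) → (Fin 3 → Fin 3 → Fin 3 → ℝ) → ℝ := fun v w =>
      ∑ i1, ∑ i2, ∑ j1, ∑ i1', ∑ i2', ∑ j1',
        g⁻¹ i1 i1' * g⁻¹ i2 i2' * g⁻¹ j1 j1' * v i1 i2 j1 * w i1' i2' j1'
    ip p1 u ≥ 0 ∧ ip p2 u ≥ 0 ∧ ip p3 u ≥ 0 := by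
  intro xiUp nsq p1 p2 p3 ip
  have hG : (g⁻¹).PosDef := hg.inv
  have hGps : (g⁻¹).PosSemidef := hG.posSemidef
  set S : Matrix (Fin 3) (Fin 3) ℝ := (open scoped MatrixOrder in CFC.sqrt (g⁻¹)) with hSdef
  have hSS : S * S = g⁻¹ := by
    open scoped MatrixOrder in exact CFC.sqrt_mul_sqrt_self _ hGps.nonneg
  have hSherm : S.IsHermitian := by
    open scoped MatrixOrder in exact (CFC.sqrt_nonneg (g⁻¹)).posSemidef.1
  have hSsym : ∀ i j, S i j = S j i := fun i j => by
    simpa using hSherm.apply j i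
  have hGS : ∀ i j, g⁻¹ i j = ∑ c, S c i * S c j := by
    intro i j
    rw [← hSS, Matrix.mul_apply]
    exact Finset.sum_congr rfl fun c _ => by rw [hSsym i c]
  have hGsym : ∀ i j, g⁻¹ i j = g⁻¹ j i := by
    intro i j; rw [hGS, hGS]
    exact Finset.sum_congr rfl fun c _ => mul_comm _ _
  set η : Fin 3 → ℝ := fun c => ∑ i, S c i * ξ i with hη
  set w : Fin 3 → Fin 3 → Fin 3 → ℝ :=
    fun a b c => ∑ k, S c k * (∑ j, S b j * (∑ i, S a i * u i j k)) with hw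
  have hxiUp : ∀ h, xiUp h = ∑ c, S c h * η c := by
    intro h; simp only [xiUp, hGS, hη, Fin.sum_univ_three]; ring
  have hnsq : nsq = ∑ c, η c ^ 2 := by
    simp only [nsq, xiUp, hGS, hη, Fin.sum_univ_three]; ring
  have hnsq0 : 0 ≤ nsq := by
    rw [hnsq]; exact Finset.sum_nonneg fun c _ => sq_nonneg _
  -- ⟨u, u⟩ in sqrt coordinates
  have hipuu : ip u u = ∑ a, ∑ b, ∑ c, w a b c ^ 2 := by
    have e1 : ip u u = ∑ a, ∑ j, ∑ k, ∑ j', ∑ k',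
        g⁻¹ j j' * g⁻¹ k k' * (∑ i, S a i * u i j k) * (∑ i', S a i' * u i' j' k') := by
      simp only [ip]; exact L3 _ _ _ _ hGS u
    rw [e1]
    refine Finset.sum_congr rfl fun a _ => ?_
    refine (L2 _ _ _ hGS fun j k => ∑ i, S a i * u i j k).trans ?_
    refine Finset.sum_congr rfl fun b _ => ?_
    refine (L1s _ _ hGS _).trans ?_
    simp only [hw]
  -- ⟨p₁ u, u⟩
  have hswap4 : ∀ f : Fin 3 → Fin 3 → Fin 3 → Fin 3 → ℝ,
      (∑ a, ∑ b, ∑ c, ∑ d, f a b c d) = ∑ b, ∑ c, ∑ a, ∑ d, f a b c d := by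
    intro f; simp only [Fin.sum_univ_three]; ring
  have hp1a : ip p1 u = ∑ i, ∑ j, ∑ i', ∑ j',
      g⁻¹ i i' * g⁻¹ j j' * (∑ h, u i j h * xiUp h) *
        (∑ k, ∑ k', g⁻¹ k k' * ξ k * u i' j' k') := by
    simp only [ip, p1]
    refine Finset.sum_congr rfl fun i _ => Finset.sum_congr rfl fun j _ => ?_
    rw [hswap4 fun k i' j' k' => g⁻¹ i i' * g⁻¹ j j' * g⁻¹ k k' *
      ((∑ h, u i j h * xiUp h) * ξ k) * u i' j' k']
    refine Finset.sum_congr rfl fun i' _ => Finset.sum_congr rfl fun j' _ => ?_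
    simp only [Fin.sum_univ_three]; ring
  have hg10 : g⁻¹ 1 0 = g⁻¹ 0 1 := hGsym 1 0
  have hg20 : g⁻¹ 2 0 = g⁻¹ 0 2 := hGsym 2 0
  have hg21 : g⁻¹ 2 1 = g⁻¹ 1 2 := hGsym 2 1
  have hp1b : ∀ i' j', (∑ k, ∑ k', g⁻¹ k k' * ξ k * u i' j' k')
      = ∑ h, u i' j' h * xiUp h := by
    intro i' j'
    simp only [xiUp, Fin.sum_univ_three]
    rw [hg10, hg20, hg21]; ring
  have hp1c : ip p1 u = ∑ i, ∑ j, ∑ i', ∑ j',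
      g⁻¹ i i' * g⁻¹ j j' * (∑ h, u i j h * xiUp h) * (∑ h, u i' j' h * xiUp h) := by
    rw [hp1a]; simp only [hp1b]
  have hp1e : ip p1 u = ∑ a, ∑ b,
      (∑ j, S b j * (∑ i, S a i * (∑ h, u i j h * xiUp h))) ^ 2 := by
    refine (hp1c.trans (L2d _ _ _ hGS fun i j => ∑ h, u i j h * xiUp h)).trans ?_
    exact Finset.sum_congr rfl fun a _ => L1s _ _ hGS _
  have hV : ∀ a b, (∑ j, S b j * (∑ i, S a i * (∑ h, u i j h * xiUp h)))
      = ∑ c, w a b c * η c := by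
    intro a b
    simp only [hxiUp, hw, Fin.sum_univ_three]; ring
  have hp1f : ip p1 u = ∑ a, ∑ b, (∑ c, w a b c * η c) ^ 2 := by
    rw [hp1e]; simp only [hV]
  refine ⟨?_, ?_, ?_⟩
  · -- p₁
    rw [ge_iff_le, hp1f]
    exact Finset.sum_nonneg fun a _ => Finset.sum_nonneg fun b _ => sq_nonneg _
  · -- p₂
    have hfold : ∀ A B C x z : ℝ, A * B * C * (nsq * x) * z = nsq * (A * B * C * x * z) :=
      fun _ _ _ _ _ => by ring
    have hp2 : ip p2 u = nsq * ip u u - ip p1 u := by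
      simp only [ip, p1, p2, mul_sub, sub_mul, Finset.sum_sub_distrib]
      rw [sub_left_inj]
      simp only [hfold, ← Finset.mul_sum]
    rw [ge_iff_le, hp2, sub_nonneg, hp1f, hipuu, hnsq, Finset.mul_sum]
    refine Finset.sum_le_sum fun a _ => ?_
    rw [Finset.mul_sum]
    refine Finset.sum_le_sum fun b _ => ?_
    exact (Finset.sum_mul_sq_le_sq_mul_sq Finset.univ (fun c => w a b c) η).trans_eq
      (mul_comm _ _)
  · -- p₃
    set c3 : Fin 3 → ℝ := fun i1 => ∑ r, ∑ h, xiUp r * xiUp h * u r i1 h with hc3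
    have hc3' : ∀ i1, (∑ r, ∑ h, xiUp r * xiUp h * u r i1 h) = c3 i1 := fun i1 => by
      rw [hc3]
    have hp3a : ip p3 u = nsq * ip u u -
        ∑ i1, ∑ i2, ∑ j1, ∑ i1', ∑ i2', ∑ j1',
          g⁻¹ i1 i1' * g⁻¹ i2 i2' * g⁻¹ j1 j1' * (g i2 j1 * c3 i1) * u i1' i2' j1' := by
      have hfold : ∀ A B C x z : ℝ, A * B * C * (nsq * x) * z = nsq * (A * B * C * x * z) :=
        fun _ _ _ _ _ => by ring
      simp only [ip, p3, hc3', mul_sub, sub_mul, Finset.sum_sub_distrib]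
      rw [sub_left_inj]
      simp only [hfold, ← Finset.mul_sum]
    have hT : (∑ i1, ∑ i2, ∑ j1, ∑ i1', ∑ i2', ∑ j1',
          g⁻¹ i1 i1' * g⁻¹ i2 i2' * g⁻¹ j1 j1' * (g i2 j1 * c3 i1) * u i1' i2' j1')
        = ∑ i1', (∑ i1, g⁻¹ i1 i1' * c3 i1) *
            (∑ i2', ∑ j1', (∑ i2, ∑ j1, g⁻¹ i2 i2' * g i2 j1 * g⁻¹ j1 j1') * u i1' i2' j1') := by
      have hswap : ∀ f : Fin 3 → Fin 3 → Fin 3 → Fin 3 → Fin 3 → Fin 3 → ℝ,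
          (∑ a, ∑ b, ∑ c, ∑ d, ∑ e, ∑ f', f a b c d e f')
            = ∑ d, ∑ e, ∑ f', ∑ a, ∑ b, ∑ c, f a b c d e f' := by
        intro f; simp only [Fin.sum_univ_three]; ring
      have hTmid : ∀ i1' i2' j1', (∑ i1, ∑ i2, ∑ j1,
            g⁻¹ i1 i1' * g⁻¹ i2 i2' * g⁻¹ j1 j1' * (g i2 j1 * c3 i1) * u i1' i2' j1')
          = (∑ i1, g⁻¹ i1 i1' * c3 i1) *
              ((∑ i2, ∑ j1, g⁻¹ i2 i2' * g i2 j1 * g⁻¹ j1 j1') * u i1' i2' j1') := by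
        intro i1' i2' j1'; simp only [Fin.sum_univ_three]; ring
      rw [hswap fun i1 i2 j1 i1' i2' j1' =>
        g⁻¹ i1 i1' * g⁻¹ i2 i2' * g⁻¹ j1 j1' * (g i2 j1 * c3 i1) * u i1' i2' j1']
      simp only [hTmid, ← Finset.mul_sum]
    have hgG : g * g⁻¹ = 1 :=
      Matrix.mul_nonsing_inv g (isUnit_iff_ne_zero.2 (ne_of_gt hg.det_pos))
    have h1 : ∀ jj k', (∑ k, g jj k * g⁻¹ k k') = (1 : Matrix (Fin 3) (Fin 3) ℝ) jj k' :=
      fun jj k' => by rw [← Matrix.mul_apply, hgG]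
    have hE : ∀ j' k', (∑ j, ∑ k, g⁻¹ j j' * g j k * g⁻¹ k k') = g⁻¹ j' k' := by
      intro j' k'
      calc ∑ j, ∑ k, g⁻¹ j j' * g j k * g⁻¹ k k'
          = ∑ j, g⁻¹ j j' * (∑ k, g j k * g⁻¹ k k') := by
            refine Finset.sum_congr rfl fun j _ => ?_
            rw [Finset.mul_sum]
            exact Finset.sum_congr rfl fun k _ => by ring
        _ = ∑ j, g⁻¹ j j' * (1 : Matrix (Fin 3) (Fin 3) ℝ) j k' := by simp only [h1]
        _ = g⁻¹ k' j' := by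
            simp [Matrix.one_apply, mul_ite, mul_one, mul_zero, Finset.sum_ite_eq']
        _ = g⁻¹ j' k' := hGsym k' j'
    have hT0 : (∑ i1, ∑ i2, ∑ j1, ∑ i1', ∑ i2', ∑ j1',
          g⁻¹ i1 i1' * g⁻¹ i2 i2' * g⁻¹ j1 j1' * (g i2 j1 * c3 i1) * u i1' i2' j1') = 0 := by
      rw [hT]
      simp only [hE, htf, mul_zero, Finset.sum_const_zero]
    rw [ge_iff_le, hp3a, hT0, sub_zero, hipuu]
    exact mul_nonneg hnsq0 (Finset.sum_nonneg fun a _ =>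
      Finset.sum_nonneg fun b _ => Finset.sum_nonneg fun c _ => sq_nonneg _)

end
end

section
/- Let u be a trace-free 2+1 tensor at a point of a 3-dimensional inner product space (symmetric in first two indices, g^{jk}u_{ijk} = 0, where trace-free means all partial traces with g vanish as implied). Suppose for every orthonormal basis {ξ, η, η̃} with ξ in an open subset U of the unit sphere: u_{ijk} η^i η^j ξ^k = 0 for all η ⟂ ξ. Then u = 0. -/
open BigOperators

set_option maxHeartbeats 1000000

/-- let `u` be a trace-free 2+1 tensor on `ℝ³` with the standard inner product
(symmetric in its first two indices, with `Σ_k u_{kjk} = Σ_k u_{jkk} = 0` for each `j`).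
If for every unit vector `ξ` in a nonempty open set `U` (open subset of `ℝ³` meeting the unit
sphere) and every `η ⟂ ξ` one has `u_{ijk} η^i η^j ξ^k = 0`, then `u = 0`. -/
theorem kernel_triviality_two_one (u : Fin 3 → Fin 3 → Fin 3 → ℝ)
    (husym : ∀ i j k, u i j k = u j i k)
    (htr1 : ∀ j, ∑ k, u k j k = 0)
    (htr2 : ∀ j, ∑ k, u j k k = 0)
    (U : Set (Fin 3 → ℝ)) (hU : IsOpen U)
    (hUne : ∃ ξ ∈ U, ∑ i, (ξ i) ^ 2 = 1)
    (hvan : ∀ ξ ∈ U, (∑ i, (ξ i) ^ 2 = 1) →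
      ∀ η : Fin 3 → ℝ, (∑ i, η i * ξ i) = 0 →
        ∑ i, ∑ j, ∑ k, u i j k * η i * η j * ξ k = 0) :
    u = fun _ _ _ => 0 := by
  classical
  obtain ⟨ξ₀, hξ₀U, hξ₀1⟩ := hUne
  set f : (Fin 3 → ℝ) × (Fin 3 → ℝ) → ℝ := fun p =>
    ∑ i, ∑ j, ∑ k, u i j k *
      ((∑ l, p.1 l ^ 2) * p.2 i - (∑ l, p.2 l * p.1 l) * p.1 i) *
      ((∑ l, p.1 l ^ 2) * p.2 j - (∑ l, p.2 l * p.1 l) * p.1 j) * p.1 k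
    with hfdef
  have hfval : ∀ x y : Fin 3 → ℝ, f (x, y) =
      ∑ i, ∑ j, ∑ k, u i j k *
        ((∑ l, x l ^ 2) * y i - (∑ l, y l * x l) * x i) *
        ((∑ l, x l ^ 2) * y j - (∑ l, y l * x l) * x j) * x k := fun _ _ => rfl
  -- analyticity of f
  have hx : ∀ i : Fin 3,
      AnalyticOnNhd ℝ (fun p : (Fin 3 → ℝ) × (Fin 3 → ℝ) => p.1 i) Set.univ := by
    intro i
    exact ((ContinuousLinearMap.proj i).comp
      (ContinuousLinearMap.fst ℝ (Fin 3 → ℝ) (Fin 3 → ℝ))).analyticOnNhd _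
  have hy : ∀ i : Fin 3,
      AnalyticOnNhd ℝ (fun p : (Fin 3 → ℝ) × (Fin 3 → ℝ) => p.2 i) Set.univ := by
    intro i
    exact ((ContinuousLinearMap.proj i).comp
      (ContinuousLinearMap.snd ℝ (Fin 3 → ℝ) (Fin 3 → ℝ))).analyticOnNhd _
  have hs : AnalyticOnNhd ℝ (fun p : (Fin 3 → ℝ) × (Fin 3 → ℝ) => ∑ l, p.1 l ^ 2) Set.univ :=
    Finset.analyticOnNhd_fun_sum _ (fun l _ => (hx l).pow 2)
  have hd : AnalyticOnNhd ℝ (fun p : (Fin 3 → ℝ) × (Fin 3 → ℝ) => ∑ l, p.2 l * p.1 l)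
      Set.univ := Finset.analyticOnNhd_fun_sum _ (fun l _ => (hy l).mul (hx l))
  have hfa : AnalyticOnNhd ℝ f Set.univ := by
    rw [hfdef]
    apply Finset.analyticOnNhd_fun_sum
    intro i _
    apply Finset.analyticOnNhd_fun_sum
    intro j _
    apply Finset.analyticOnNhd_fun_sum
    intro k _
    exact ((analyticOnNhd_const.mul ((hs.mul (hy i)).sub (hd.mul (hx i)))).mul
      ((hs.mul (hy j)).sub (hd.mul (hx j)))).mul (hx k)
  -- f vanishes at unit vectors of U
  have key : ∀ ξ ∈ U, (∑ l, (ξ l) ^ 2 = 1) → ∀ y : Fin 3 → ℝ, f (ξ, y) = 0 := by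
    intro ξ hξ h1 y
    have hperp : (∑ i, (y i - (∑ l, y l * ξ l) * ξ i) * ξ i) = 0 := by
      have h1' := h1
      simp only [Fin.sum_univ_three] at h1' ⊢
      linear_combination (-(y 0 * ξ 0 + y 1 * ξ 1 + y 2 * ξ 2)) * h1'
    have hv := hvan ξ hξ h1 (fun i => y i - (∑ l, y l * ξ l) * ξ i) hperp
    rw [hfval, h1]
    simp only [one_mul]
    exact hv
  -- homogeneity of f in the first variable
  have hhom : ∀ (c : ℝ) (x y : Fin 3 → ℝ), f (c • x, y) = c ^ 5 * f (x, y) := by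
    intro c x y
    rw [hfval, hfval]
    simp only [Pi.smul_apply, smul_eq_mul, Fin.sum_univ_three]
    ring
  -- the open cone over U × everything
  set g : (Fin 3 → ℝ) × (Fin 3 → ℝ) → (Fin 3 → ℝ) := fun p =>
    (Real.sqrt (∑ l, p.1 l ^ 2))⁻¹ • p.1 with hgdef
  set S : Set ((Fin 3 → ℝ) × (Fin 3 → ℝ)) := {p | 0 < ∑ l, p.1 l ^ 2} with hSdef
  have hScont : Continuous fun p : (Fin 3 → ℝ) × (Fin 3 → ℝ) => ∑ l, p.1 l ^ 2 :=
    continuous_finset_sum _ fun l _ => ((continuous_apply l).comp continuous_fst).pow 2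
  have hSopen : IsOpen S := isOpen_lt continuous_const hScont
  have hgcont : ContinuousOn g S := by
    apply ContinuousOn.fun_smul
    · apply ContinuousOn.inv₀
      · exact (hScont.continuousOn).sqrt
      · intro p hp
        exact (Real.sqrt_pos.mpr hp).ne'
    · exact continuous_fst.continuousOn
  have hWopen : IsOpen (S ∩ g ⁻¹' U) := hgcont.isOpen_inter_preimage hSopen hU
  have hz₀ : ((ξ₀, (0 : Fin 3 → ℝ)) : (Fin 3 → ℝ) × (Fin 3 → ℝ)) ∈ S ∩ g ⁻¹' U := by
    constructor
    · show 0 < ∑ l, ξ₀ l ^ 2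
      rw [hξ₀1]; norm_num
    · show (Real.sqrt (∑ l, ξ₀ l ^ 2))⁻¹ • ξ₀ ∈ U
      rw [hξ₀1, Real.sqrt_one, inv_one, one_smul]
      exact hξ₀U
  have hfW : Set.EqOn f 0 (S ∩ g ⁻¹' U) := by
    intro p hp
    have hp1 : 0 < ∑ l, p.1 l ^ 2 := hp.1
    have hp2 : (Real.sqrt (∑ l, p.1 l ^ 2))⁻¹ • p.1 ∈ U := hp.2
    set t : ℝ := Real.sqrt (∑ l, p.1 l ^ 2) with htdef
    have ht : 0 < t := Real.sqrt_pos.mpr hp1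
    have ht2 : t ^ 2 = ∑ l, p.1 l ^ 2 := Real.sq_sqrt hp1.le
    have hunit : ∑ l, ((t⁻¹ • p.1) l) ^ 2 = 1 := by
      simp only [Pi.smul_apply, smul_eq_mul, mul_pow, ← Finset.mul_sum]
      rw [← ht2]
      field_simp
    have h0 : f (t⁻¹ • p.1, p.2) = 0 := key _ hp2 hunit p.2
    have hx1 : p.1 = t • (t⁻¹ • p.1) := by
      rw [smul_smul, mul_inv_cancel₀ ht.ne', one_smul]
    have : f p = f (t • (t⁻¹ • p.1), p.2) := by rw [← hx1]
    rw [this, hhom, h0, mul_zero]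
    rfl
  have hev : f =ᶠ[nhds ((ξ₀, (0 : Fin 3 → ℝ)) : (Fin 3 → ℝ) × (Fin 3 → ℝ))] 0 :=
    Filter.eventuallyEq_of_mem (hWopen.mem_nhds hz₀) hfW
  have hf0 : ∀ x y : Fin 3 → ℝ, f (x, y) = 0 := by
    intro x y
    have := hfa.eqOn_zero_of_preconnected_of_eventuallyEq_zero isPreconnected_univ
      (Set.mem_univ _) hev (Set.mem_univ (x, y))
    simpa using this
  have E : ∀ x y : Fin 3 → ℝ,
      (∑ i, ∑ j, ∑ k, u i j k *
        ((∑ l, x l ^ 2) * y i - (∑ l, y l * x l) * x i) *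
        ((∑ l, x l ^ 2) * y j - (∑ l, y l * x l) * x j) * x k) = 0 := by
    intro x y
    rw [← hfval]
    exact hf0 x y
  -- extract linear equations at concrete points
  have e01 := E ![1,0,0] ![0,1,0]
  have e02 := E ![1,0,0] ![0,0,1]
  have e0s := E ![1,0,0] ![0,1,1]
  have e10 := E ![0,1,0] ![1,0,0]
  have e12 := E ![0,1,0] ![0,0,1]
  have e1s := E ![0,1,0] ![1,0,1]
  have e20 := E ![0,0,1] ![1,0,0]
  have e21 := E ![0,0,1] ![0,1,0]
  have e2s := E ![0,0,1] ![1,1,0]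
  have c01a := E ![1,1,0] ![1,-1,0]
  have c01b := E ![1,-1,0] ![1,1,0]
  have c02a := E ![1,0,1] ![1,0,-1]
  have c02b := E ![1,0,-1] ![1,0,1]
  have c12a := E ![0,1,1] ![0,1,-1]
  have c12b := E ![0,1,-1] ![0,1,1]
  have t10 := htr1 0; have t11 := htr1 1; have t12 := htr1 2
  have t20 := htr2 0; have t21 := htr2 1; have t22 := htr2 2
  simp only [Fin.sum_univ_three, Matrix.cons_val_zero, Matrix.cons_val_one, Matrix.head_cons,
    Matrix.cons_val_two, Matrix.tail_cons] at e01 e02 e0s e10 e12 e1s e20 e21 e2s c01a c01b c02a c02b c12a c12b t10 t11 t12 t20 t21 t22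
  ring_nf at e01 e02 e0s e10 e12 e1s e20 e21 e2s c01a c01b c02a c02b c12a c12b
  funext i j k
  have s010 := husym 0 1 0; have s020 := husym 0 2 0; have s120 := husym 1 2 0
  have s011 := husym 0 1 1; have s021 := husym 0 2 1; have s121 := husym 1 2 1
  have s012 := husym 0 1 2; have s022 := husym 0 2 2; have s122 := husym 1 2 2
  fin_cases i <;> fin_cases j <;> fin_cases k <;>
    simp only [show ((⟨0, by omega⟩ : Fin 3)) = 0 from rfl, show ((⟨1, by omega⟩ : Fin 3)) = 1 from rfl,
      show ((⟨2, by omega⟩ : Fin 3)) = 2 from rfl] <;>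
    linarith [e01, e02, e0s, e10, e12, e1s, e20, e21, e2s, c01a, c01b, c02a, c02b, c12a, c12b,
      t10, t11, t12, t20, t21, t22, s010, s020, s120, s011, s021, s121, s012, s022, s122]
end

section
/- The constant-coefficient characteristic ODE system for the Lopatinskij condition has only the trivial bounded solution: if v(t) is a C² map from [0,∞) to trace-free 2+1 tensors over ℝ³ (with the Euclidean metric) satisfying v(0) = 0, v(t) → 0 as t → ∞, and the frozen-coefficient equations D_t v_{i1 i2 3} − (1/5)(D_t v_{i1 3 3} δ_{i2 3} + D_t v_{i2 3 3} δ_{i1 3}) − (1/5) Σ_{r≠3}(v_{i1 r 3} ξ^r δ_{i2 3} + v_{i2 r 3} ξ^r δ_{i1 3}) = 0 together with the analogous equations for j1 ≠ 3 (equation (eq_vijk2) of the paper) for some fixed ξ' ∈ ℝ² \ {0}, then v ≡ 0. -/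
open BigOperators

noncomputable section

private lemma zero_of_deriv_zero {f : ℝ → ℂ} (hc : Continuous f) (hdf : Differentiable ℝ f)
    (h0 : f 0 = 0) (hd : ∀ t, 0 ≤ t → deriv f t = 0) :
    ∀ t, 0 ≤ t → f t = 0 := by
  intro t ht
  have h := constant_of_has_deriv_right_zero (f := f) (a := 0) (b := t)
    hc.continuousOn (fun x hx => by
      have h1 : HasDerivAt f (deriv f x) x := (hdf x).hasDerivAt
      rw [hd x hx.1] at h1
      exact h1.hasDerivWithinAt) t (Set.right_mem_Icc.mpr ht)
  rwa [h0] at h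

private lemma I_mul_zero {d : ℂ} (h : -Complex.I * d = 0) : d = 0 := by
  simpa [Complex.I_ne_zero] using h

/-- the constant-coefficient characteristic ODE system for the Lopatinskij
condition has only the trivial bounded solution: if `v(t)` is a `C²` map from `[0,∞)` to
trace-free 2+1 tensors over ℝ³ (Euclidean metric; here the "third" index is `2 : Fin 3`)
satisfying `v(0) = 0`, `v(t) → 0` as `t → ∞`, and the frozen-coefficient equations
(eq_vijk1) and (eq_vijk2) of the paper for some fixed `ξ' ∈ ℝ² \ {0}`, then `v ≡ 0`. -/
theorem lopatinskij_trivial_solution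
    (ξ : Fin 3 → ℝ) (hξ3 : ξ 2 = 0) (hξ : ξ ≠ 0)
    (v : ℝ → Fin 3 → Fin 3 → Fin 3 → ℂ)
    (hreg : ∀ i j k, ContDiff ℝ 2 (fun t => v t i j k))
    (hsym : ∀ t i1 i2 j, v t i1 i2 j = v t i2 i1 j)
    (htf : ∀ t i1, ∑ k, v t i1 k k = 0)
    (hv0 : v 0 = fun _ _ _ => 0)
    (hdecay : ∀ i j k, Filter.Tendsto (fun t => v t i j k) Filter.atTop (nhds 0)) :
    let δ : Fin 3 → Fin 3 → ℂ := fun i j => if i = j then 1 else 0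
    let Dt : (ℝ → ℂ) → ℝ → ℂ := fun f t => (-Complex.I) * deriv f t
    (∀ t, 0 ≤ t → ∀ i1 i2 : Fin 3,
        Dt (fun s => v s i1 i2 2) t
        - (1 / 5) * (Dt (fun s => v s i1 2 2) t * δ i2 2 + Dt (fun s => v s i2 2 2) t * δ i1 2)
        - (1 / 5) * (∑ r, (v t i1 r 2 * (ξ r : ℂ) * δ i2 2
            + v t i2 r 2 * (ξ r : ℂ) * δ i1 2)) = 0) →
    (∀ t, 0 ≤ t → ∀ i1 i2 j1 : Fin 3, j1 ≠ 2 →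
        (1 / 2) * Dt (fun s => v s i1 i2 j1) t
        - (1 / 10) * (Dt (fun s => v s i1 2 j1) t * δ i2 2 + Dt (fun s => v s i2 2 j1) t * δ i1 2
            + Dt (fun s => v s i1 2 2) t * δ i2 j1 + Dt (fun s => v s i2 2 2) t * δ i1 j1)
        + (1 / 2) * v t i1 i2 2 * (ξ j1 : ℂ)
        - (1 / 10) * (∑ m, (v t i1 m j1 * (ξ m : ℂ) * δ i2 2 + v t i2 m j1 * (ξ m : ℂ) * δ i1 2
            + v t i1 m 2 * (ξ m : ℂ) * δ i2 j1 + v t i2 m 2 * (ξ m : ℂ) * δ i1 j1)) = 0) →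
    ∀ t, 0 ≤ t → v t = fun _ _ _ => 0 := by
  intro δ Dt heq1 heq2
  unfold δ Dt at heq1 heq2
  clear δ Dt
  have hcont : ∀ i j k, Continuous fun t => v t i j k := fun i j k => (hreg i j k).continuous
  have hdiff : ∀ i j k, Differentiable ℝ fun t => v t i j k :=
    fun i j k => (hreg i j k).differentiable (by norm_num)
  have hv0' : ∀ i j k, v 0 i j k = 0 := by intro i j k; rw [hv0]
  have hξ3' : ((ξ 2 : ℝ) : ℂ) = 0 := by rw [hξ3]; norm_num
  -- Step 1: components v_{i j 2} with i,j ≠ 2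
  have hd1 : ∀ i j : Fin 3, i ≠ 2 → j ≠ 2 → ∀ t, 0 ≤ t →
      deriv (fun s => v s i j 2) t = 0 := by
    intro i j hi hj t ht
    have h := heq1 t ht i j
    apply I_mul_zero
    simpa [hi, hj] using h
  have hz1 : ∀ i j : Fin 3, i ≠ 2 → j ≠ 2 → ∀ t, 0 ≤ t → v t i j 2 = 0 :=
    fun i j hi hj => zero_of_deriv_zero (hcont i j 2) (hdiff i j 2) (hv0' i j 2) (hd1 i j hi hj)
  -- Step 2: v_{i 2 2}, i ≠ 2
  have hd2 : ∀ i : Fin 3, i ≠ 2 → ∀ t, 0 ≤ t → deriv (fun s => v s i 2 2) t = 0 := by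
    intro i hi t ht
    have h := heq1 t ht i 2
    apply I_mul_zero
    simp only [Fin.sum_univ_three] at h
    rw [hz1 i 0 hi (by decide) t ht, hz1 i 1 hi (by decide) t ht, hξ3'] at h
    simp only [eq_self_iff_true, if_true, if_neg hi] at h
    linear_combination (5/4 : ℂ) * h
  have hz2 : ∀ i : Fin 3, i ≠ 2 → ∀ t, 0 ≤ t → v t i 2 2 = 0 :=
    fun i hi => zero_of_deriv_zero (hcont i 2 2) (hdiff i 2 2) (hv0' i 2 2) (hd2 i hi)
  -- Step 3: v_{2 2 2}
  have hd3 : ∀ t, 0 ≤ t → deriv (fun s => v s 2 2 2) t = 0 := by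
    intro t ht
    have h := heq1 t ht 2 2
    apply I_mul_zero
    simp only [Fin.sum_univ_three] at h
    rw [show v t 2 0 2 = v t 0 2 2 from hsym t 2 0 2, show v t 2 1 2 = v t 1 2 2 from hsym t 2 1 2,
      hz2 0 (by decide) t ht, hz2 1 (by decide) t ht, hξ3'] at h
    simp only [eq_self_iff_true, if_true] at h
    linear_combination (5/3 : ℂ) * h
  have hz3 : ∀ t, 0 ≤ t → v t 2 2 2 = 0 :=
    zero_of_deriv_zero (hcont 2 2 2) (hdiff 2 2 2) (hv0' 2 2 2) hd3
  -- consolidated: all third-index-2 components and their derivatives vanish on [0,∞)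
  have hz : ∀ i j : Fin 3, ∀ t, 0 ≤ t → v t i j 2 = 0 := by
    intro i j t ht
    by_cases hi : i = 2 <;> by_cases hj : j = 2
    · subst hi; subst hj; exact hz3 t ht
    · subst hi; rw [hsym t 2 j 2]; exact hz2 j hj t ht
    · subst hj; exact hz2 i hi t ht
    · exact hz1 i j hi hj t ht
  have hdA : ∀ i j : Fin 3, ∀ t, 0 ≤ t → deriv (fun s => v s i j 2) t = 0 := by
    intro i j t ht
    by_cases hi : i = 2 <;> by_cases hj : j = 2
    · subst hi; subst hj; exact hd3 t ht
    · subst hi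
      have : (fun s => v s 2 j 2) = fun s => v s j 2 2 := funext fun s => hsym s 2 j 2
      rw [this]; exact hd2 j hj t ht
    · subst hj; exact hd2 i hi t ht
    · exact hd1 i j hi hj t ht
  -- Step 4: v_{a b c}, a,b,c ≠ 2
  have hd4 : ∀ a b c : Fin 3, a ≠ 2 → b ≠ 2 → c ≠ 2 → ∀ t, 0 ≤ t →
      deriv (fun s => v s a b c) t = 0 := by
    intro a b c ha hb hc t ht
    have h := heq2 t ht a b c hc
    simp only [Fin.sum_univ_three] at h
    rw [hz a b t ht, hz a 0 t ht, hz a 1 t ht, hz a 2 t ht,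
      hz b 0 t ht, hz b 1 t ht, hz b 2 t ht, hξ3',
      hd2 a ha t ht, hd2 b hb t ht] at h
    simp only [eq_self_iff_true, if_true, if_neg ha, if_neg hb] at h
    apply I_mul_zero
    linear_combination (2 : ℂ) * h
  have hz4 : ∀ a b c : Fin 3, a ≠ 2 → b ≠ 2 → c ≠ 2 → ∀ t, 0 ≤ t → v t a b c = 0 :=
    fun a b c ha hb hc => zero_of_deriv_zero (hcont a b c) (hdiff a b c) (hv0' a b c)
      (hd4 a b c ha hb hc)
  -- Step 5: v_{a 2 c}, a,c ≠ 2
  have hd5 : ∀ a c : Fin 3, a ≠ 2 → c ≠ 2 → ∀ t, 0 ≤ t →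
      deriv (fun s => v s a 2 c) t = 0 := by
    intro a c ha hc t ht
    have h := heq2 t ht a 2 c hc
    simp only [Fin.sum_univ_three] at h
    rw [hz a 2 t ht, hz a 0 t ht, hz a 1 t ht,
      hz 2 0 t ht, hz 2 1 t ht, hz 2 2 t ht, hξ3',
      hz4 a 0 c ha (by decide) hc t ht, hz4 a 1 c ha (by decide) hc t ht,
      hd2 a ha t ht, hd3 t ht] at h
    simp only [eq_self_iff_true, if_true, if_neg ha, if_neg (Ne.symm hc)] at h
    apply I_mul_zero
    linear_combination (5/2 : ℂ) * h
  have hz5 : ∀ a c : Fin 3, a ≠ 2 → c ≠ 2 → ∀ t, 0 ≤ t → v t a 2 c = 0 :=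
    fun a c ha hc => zero_of_deriv_zero (hcont a 2 c) (hdiff a 2 c) (hv0' a 2 c) (hd5 a c ha hc)
  -- Step 6: v_{2 2 c}, c ≠ 2
  have hd6 : ∀ c : Fin 3, c ≠ 2 → ∀ t, 0 ≤ t → deriv (fun s => v s 2 2 c) t = 0 := by
    intro c hc t ht
    have h := heq2 t ht 2 2 c hc
    simp only [Fin.sum_univ_three] at h
    rw [hz 2 2 t ht, hz 2 0 t ht, hz 2 1 t ht, hξ3',
      show v t 2 0 c = v t 0 2 c from hsym t 2 0 c, show v t 2 1 c = v t 1 2 c from hsym t 2 1 c,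
      hz5 0 c (by decide) hc t ht, hz5 1 c (by decide) hc t ht,
      hd3 t ht] at h
    simp only [eq_self_iff_true, if_true, if_neg (Ne.symm hc)] at h
    apply I_mul_zero
    linear_combination (10/3 : ℂ) * h
  have hz6 : ∀ c : Fin 3, c ≠ 2 → ∀ t, 0 ≤ t → v t 2 2 c = 0 :=
    fun c hc => zero_of_deriv_zero (hcont 2 2 c) (hdiff 2 2 c) (hv0' 2 2 c) (hd6 c hc)
  -- conclude
  intro t ht
  funext i j k
  by_cases hk : k = 2
  · subst hk; exact hz i j t ht
  by_cases hi : i = 2 <;> by_cases hj : j = 2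
  · subst hi; subst hj; exact hz6 k hk t ht
  · subst hi; rw [hsym t 2 j k]; exact hz5 j k hj hk t ht
  · subst hj; exact hz5 i k hi hk t ht
  · exact hz4 i j k hi hj hk t ht
end
end

section
/- The principal symbol of the normal operator of the mixed ray transform on 1+1 tensors over ℝ³ with metric g at (x, ξ) is given explicitly by σ(N)^{ijkℓ}(x,ξ) = −(√π/(3·2^{5/2})) [ −12 g^{ik}|ξ|^{−1}(g^{jℓ} − |ξ|^{−2}ξ^j ξ^ℓ) + 9|ξ|^{−5} ξ^i ξ^j ξ^k ξ^ℓ + 3|ξ|^{−1}(g^{jk}g^{iℓ} + g^{ik}g^{jℓ} + g^{kℓ}g^{ij}) − 3|ξ|^{−3}(g^{ij}ξ^kξ^ℓ + g^{ik}ξ^jξ^ℓ + g^{iℓ}ξ^jξ^k + g^{jk}ξ^iξ^ℓ + g^{jℓ}ξ^iξ^k + g^{kℓ}ξ^iξ^j)], obtained by computing C(−12 g^{ik} ∂²|ξ|/∂ξ_j∂ξ_ℓ + ∂⁴|ξ|³/∂ξ_i∂ξ_j∂ξ_k∂ξ_ℓ) with C = −√π/(3·2^{5/2}). -/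
open Matrix BigOperators
noncomputable section

namespace NOPS

def U (A : Matrix (Fin 3) (Fin 3) ℝ) (m : Fin 3) : (Fin 3 → ℝ) →L[ℝ] ℝ :=
  ∑ j, A m j • (ContinuousLinearMap.proj j : (Fin 3 → ℝ) →L[ℝ] ℝ)

lemma U_apply (A : Matrix (Fin 3) (Fin 3) ℝ) (m : Fin 3) (p : Fin 3 → ℝ) :
    U A m p = ∑ j, A m j * p j := by
  simp [U]

def Q (A : Matrix (Fin 3) (Fin 3) ℝ) (p : Fin 3 → ℝ) : ℝ := ∑ i, ∑ j, A i j * p i * p j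

lemma Q_eq (A : Matrix (Fin 3) (Fin 3) ℝ) (p : Fin 3 → ℝ) :
    Q A p = ∑ i, p i * U A i p := by
  unfold Q
  refine Finset.sum_congr rfl fun i _ => ?_
  rw [U_apply, Finset.mul_sum]
  exact Finset.sum_congr rfl fun j _ => by ring

lemma hasFDerivAt_Q (A : Matrix (Fin 3) (Fin 3) ℝ) (p : Fin 3 → ℝ) :
    HasFDerivAt (Q A)
      (∑ i, (p i • U A i + U A i p • (ContinuousLinearMap.proj i : (Fin 3 → ℝ) →L[ℝ] ℝ))) p := by
  have hfun : Q A = fun q => ∑ i, (ContinuousLinearMap.proj i : (Fin 3 → ℝ) →L[ℝ] ℝ) q * U A i q := by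
    funext q; rw [Q_eq]; rfl
  rw [hfun]
  exact HasFDerivAt.fun_sum fun i _ =>
    ((ContinuousLinearMap.proj i : (Fin 3 → ℝ) →L[ℝ] ℝ).hasFDerivAt.mul (U A i).hasFDerivAt)

lemma DQ_single (A : Matrix (Fin 3) (Fin 3) ℝ) (hA : ∀ i j, A i j = A j i)
    (p : Fin 3 → ℝ) (m : Fin 3) :
    (∑ i, (p i • U A i + U A i p • (ContinuousLinearMap.proj i : (Fin 3 → ℝ) →L[ℝ] ℝ)))
      ((Pi.single m 1 : Fin 3 → ℝ)) = 2 * U A m p := by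
  simp only [ContinuousLinearMap.sum_apply, ContinuousLinearMap.add_apply,
    ContinuousLinearMap.smul_apply, ContinuousLinearMap.proj_apply, smul_eq_mul, U_apply]
  rw [Finset.sum_add_distrib]
  have h1 : ∑ i, p i * ∑ j, A i j * (Pi.single m 1 : Fin 3 → ℝ) j = ∑ i, A m i * p i := by
    refine Finset.sum_congr rfl fun i _ => ?_
    rw [Finset.sum_eq_single m]
    · simp [hA i m]; ring
    · intro b _ hb; simp [Pi.single_apply, hb]
    · simp
  have h2 : ∑ i, (∑ j, A i j * p j) * (Pi.single m 1 : Fin 3 → ℝ) i = ∑ j, A m j * p j := by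
    rw [Finset.sum_eq_single m]
    · simp
    · intro b _ hb; simp [Pi.single_apply, hb]
    · simp
  rw [h1, h2]
  ring



def DQ (A : Matrix (Fin 3) (Fin 3) ℝ) (p : Fin 3 → ℝ) : (Fin 3 → ℝ) →L[ℝ] ℝ :=
  ∑ i, (p i • U A i + U A i p • (ContinuousLinearMap.proj i : (Fin 3 → ℝ) →L[ℝ] ℝ))

lemma hasFDerivAt_Q' (A : Matrix (Fin 3) (Fin 3) ℝ) (p : Fin 3 → ℝ) :
    HasFDerivAt (Q A) (DQ A p) p := hasFDerivAt_Q A p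

lemma DQ_single' (A : Matrix (Fin 3) (Fin 3) ℝ) (hA : ∀ i j, A i j = A j i)
    (p : Fin 3 → ℝ) (m : Fin 3) :
    DQ A p ((Pi.single m 1 : Fin 3 → ℝ)) = 2 * U A m p := DQ_single A hA p m

lemma U_single (A : Matrix (Fin 3) (Fin 3) ℝ) (m j : Fin 3) :
    U A m ((Pi.single j 1 : Fin 3 → ℝ)) = A m j := by
  rw [U_apply, Finset.sum_eq_single j]
  · simp
  · intro b _ hb; simp [Pi.single_apply, hb]
  · simp

section Levels
variable (A : Matrix (Fin 3) (Fin 3) ℝ)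

lemma hasFDerivAt_sqrtQ (p : Fin 3 → ℝ) (hp : 0 < Q A p) :
    HasFDerivAt (fun q => Real.sqrt (Q A q))
      ((1 / (2 * Real.sqrt (Q A p))) • DQ A p) p :=
  (Real.hasDerivAt_sqrt hp.ne').comp_hasFDerivAt p (hasFDerivAt_Q' A p)

lemma pd_sqrtQ (hA : ∀ i j, A i j = A j i) (p : Fin 3 → ℝ) (hp : 0 < Q A p) (m : Fin 3) :
    fderiv ℝ (fun q => Real.sqrt (Q A q)) p ((Pi.single m 1 : Fin 3 → ℝ))
      = U A m p / Real.sqrt (Q A p) := by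
  have hs : Real.sqrt (Q A p) ≠ 0 := (Real.sqrt_pos.2 hp).ne'
  rw [(hasFDerivAt_sqrtQ A p hp).fderiv]
  simp only [ContinuousLinearMap.smul_apply, smul_eq_mul, DQ_single' A hA]
  field_simp


lemma hasFDerivAt_invSqrtQ (p : Fin 3 → ℝ) (hp : 0 < Q A p) :
    HasFDerivAt (fun q => (Real.sqrt (Q A q))⁻¹)
      ((-(Real.sqrt (Q A p) ^ 2)⁻¹) • ((1 / (2 * Real.sqrt (Q A p))) • DQ A p)) p := by
  have hs : Real.sqrt (Q A p) ≠ 0 := (Real.sqrt_pos.2 hp).ne'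
  exact (hasDerivAt_inv hs).comp_hasFDerivAt p (hasFDerivAt_sqrtQ A p hp)

lemma pd_F1 (hA : ∀ i j, A i j = A j i) (l : Fin 3) (p : Fin 3 → ℝ) (hp : 0 < Q A p) (m : Fin 3) :
    fderiv ℝ (fun q => U A l q * (Real.sqrt (Q A q))⁻¹) p ((Pi.single m 1 : Fin 3 → ℝ))
      = A l m / Real.sqrt (Q A p)
        - U A l p * U A m p / Real.sqrt (Q A p) ^ 3 := by
  have hs : Real.sqrt (Q A p) ≠ 0 := (Real.sqrt_pos.2 hp).ne'
  have h := (U A l).hasFDerivAt.mul (hasFDerivAt_invSqrtQ A p hp)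
  have h2 : HasFDerivAt (fun q => U A l q * (Real.sqrt (Q A q))⁻¹) _ p := h
  rw [h2.fderiv]
  simp only [ContinuousLinearMap.smul_apply, ContinuousLinearMap.sub_apply, neg_smul,
    ContinuousLinearMap.neg_apply, ContinuousLinearMap.add_apply, smul_eq_mul,
    DQ_single' A hA, U_single]
  set q0 := Q A p with hq0def
  set s := Real.sqrt q0 with hsdef
  have hsq : s ^ 2 = q0 := Real.sq_sqrt hp.le
  try rw [← hsq]
  field_simp
  ring

lemma hasFDerivAt_cube (p : Fin 3 → ℝ) (hp : 0 < Q A p) :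
    HasFDerivAt (fun q => Real.sqrt (Q A q) ^ 3)
      ((((3:ℕ) * Real.sqrt (Q A p) ^ 2) : ℝ) • ((1 / (2 * Real.sqrt (Q A p))) • DQ A p)) p :=
  by
  have hd : HasDerivAt (fun x : ℝ => x ^ 3) (((3:ℕ) : ℝ) * Real.sqrt (Q A p) ^ 2)
      (Real.sqrt (Q A p)) := hasDerivAt_pow 3 _
  exact hd.comp_hasFDerivAt p (hasFDerivAt_sqrtQ A p hp)

lemma pd_cube (hA : ∀ i j, A i j = A j i) (p : Fin 3 → ℝ) (hp : 0 < Q A p) (m : Fin 3) :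
    fderiv ℝ (fun q => Real.sqrt (Q A q) ^ 3) p ((Pi.single m 1 : Fin 3 → ℝ))
      = 3 * Real.sqrt (Q A p) * U A m p := by
  have hs : Real.sqrt (Q A p) ≠ 0 := (Real.sqrt_pos.2 hp).ne'
  rw [(hasFDerivAt_cube A p hp).fderiv]
  simp only [ContinuousLinearMap.smul_apply, smul_eq_mul, DQ_single' A hA, Nat.cast_ofNat]
  set q0 := Q A p with hq0def
  set s := Real.sqrt q0 with hsdef
  have hsq : s ^ 2 = q0 := Real.sq_sqrt hp.le
  try rw [← hsq]
  field_simp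

lemma pd_G1 (hA : ∀ i j, A i j = A j i) (l : Fin 3) (p : Fin 3 → ℝ) (hp : 0 < Q A p) (m : Fin 3) :
    fderiv ℝ (fun q => 3 * Real.sqrt (Q A q) * U A l q) p ((Pi.single m 1 : Fin 3 → ℝ))
      = 3 * U A m p * U A l p * (Real.sqrt (Q A p))⁻¹ + 3 * Real.sqrt (Q A p) * A l m := by
  have hs : Real.sqrt (Q A p) ≠ 0 := (Real.sqrt_pos.2 hp).ne'
  have h := ((hasFDerivAt_sqrtQ A p hp).const_mul 3).mul (U A l).hasFDerivAt
  have h2 : HasFDerivAt (fun q => 3 * Real.sqrt (Q A q) * U A l q) _ p := h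
  rw [h2.fderiv]
  simp only [ContinuousLinearMap.smul_apply, ContinuousLinearMap.add_apply, smul_eq_mul,
    DQ_single' A hA, U_single]
  set q0 := Q A p with hq0def
  set s := Real.sqrt q0 with hsdef
  have hsq : s ^ 2 = q0 := Real.sq_sqrt hp.le
  try rw [← hsq]
  field_simp
  ring

lemma hasFDerivAt_invCube (p : Fin 3 → ℝ) (hp : 0 < Q A p) :
    HasFDerivAt (fun q => (Real.sqrt (Q A q) ^ 3)⁻¹)
      ((-((Real.sqrt (Q A p) ^ 3) ^ 2)⁻¹) •
        ((((3:ℕ) * Real.sqrt (Q A p) ^ 2) : ℝ) • ((1 / (2 * Real.sqrt (Q A p))) • DQ A p))) p := by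
  have hs : Real.sqrt (Q A p) ≠ 0 := (Real.sqrt_pos.2 hp).ne'
  exact (hasDerivAt_inv (pow_ne_zero 3 hs)).comp_hasFDerivAt p (hasFDerivAt_cube A p hp)

lemma pd_G2 (hA : ∀ i j, A i j = A j i) (k l : Fin 3) (p : Fin 3 → ℝ) (hp : 0 < Q A p)
    (m : Fin 3) :
    fderiv ℝ (fun q => 3 * U A k q * U A l q * (Real.sqrt (Q A q))⁻¹
        + 3 * Real.sqrt (Q A q) * A l k) p ((Pi.single m 1 : Fin 3 → ℝ))
      = 3 * (A k m * U A l p + A l m * U A k p + A l k * U A m p) * (Real.sqrt (Q A p))⁻¹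
        - 3 * (U A k p * U A l p * U A m p) * (Real.sqrt (Q A p) ^ 3)⁻¹ := by
  have hs : Real.sqrt (Q A p) ≠ 0 := (Real.sqrt_pos.2 hp).ne'
  have h := ((((U A k).hasFDerivAt.const_mul 3).mul (U A l).hasFDerivAt).mul
      (hasFDerivAt_invSqrtQ A p hp)).add
    (((hasFDerivAt_sqrtQ A p hp).const_mul 3).mul_const (A l k))
  have h2 : HasFDerivAt (fun q => 3 * U A k q * U A l q * (Real.sqrt (Q A q))⁻¹
      + 3 * Real.sqrt (Q A q) * A l k) _ p := h
  rw [h2.fderiv]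
  simp only [ContinuousLinearMap.smul_apply, ContinuousLinearMap.add_apply, neg_smul,
    ContinuousLinearMap.neg_apply, smul_eq_mul, DQ_single' A hA, U_single, Pi.mul_apply]
  set q0 := Q A p with hq0def
  set s := Real.sqrt q0 with hsdef
  have hsq : s ^ 2 = q0 := Real.sq_sqrt hp.le
  try rw [← hsq]
  field_simp
  ring

lemma pd_G3 (hA : ∀ i j, A i j = A j i) (j k l : Fin 3) (p : Fin 3 → ℝ) (hp : 0 < Q A p)
    (i : Fin 3) :
    fderiv ℝ (fun q => 3 * (A k j * U A l q + A l j * U A k q + A l k * U A j q)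
          * (Real.sqrt (Q A q))⁻¹
        - 3 * (U A k q * U A l q * U A j q) * (Real.sqrt (Q A q) ^ 3)⁻¹) p
      ((Pi.single i 1 : Fin 3 → ℝ))
      = 9 * U A i p * U A j p * U A k p * U A l p * (Real.sqrt (Q A p) ^ 5)⁻¹
        - 3 * (A j i * U A k p * U A l p + A k i * U A j p * U A l p
            + A l i * U A j p * U A k p + A k j * U A l p * U A i p
            + A l j * U A k p * U A i p + A l k * U A j p * U A i p)
          * (Real.sqrt (Q A p) ^ 3)⁻¹
        + 3 * (A k j * A l i + A l j * A k i + A l k * A j i) * (Real.sqrt (Q A p))⁻¹ := by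
  have hs : Real.sqrt (Q A p) ≠ 0 := (Real.sqrt_pos.2 hp).ne'
  have h := (((((U A l).hasFDerivAt.const_mul (A k j)).add
        ((U A k).hasFDerivAt.const_mul (A l j))).add
        ((U A j).hasFDerivAt.const_mul (A l k))).const_mul 3).mul
      (hasFDerivAt_invSqrtQ A p hp) |>.sub
    (((((U A k).hasFDerivAt.mul (U A l).hasFDerivAt).mul (U A j).hasFDerivAt).const_mul 3).mul
      (hasFDerivAt_invCube A p hp))
  have h2 : HasFDerivAt (fun q => 3 * (A k j * U A l q + A l j * U A k q + A l k * U A j q)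
        * (Real.sqrt (Q A q))⁻¹
      - 3 * (U A k q * U A l q * U A j q) * (Real.sqrt (Q A q) ^ 3)⁻¹) _ p := h
  rw [h2.fderiv]
  simp only [ContinuousLinearMap.smul_apply, ContinuousLinearMap.add_apply,
    ContinuousLinearMap.sub_apply, neg_smul, ContinuousLinearMap.neg_apply, smul_eq_mul,
    DQ_single' A hA, U_single, Nat.cast_ofNat, Pi.mul_apply, Pi.add_apply]
  set q0 := Q A p with hq0def
  set s := Real.sqrt q0 with hsdef
  have hsq : s ^ 2 = q0 := Real.sq_sqrt hp.le
  try rw [← hsq]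
  field_simp
  ring

end Levels


lemma Q_continuous (A : Matrix (Fin 3) (Fin 3) ℝ) : Continuous (Q A) := by
  unfold Q
  fun_prop

end NOPS


open NOPS

/-- the principal symbol of the normal operator of the mixed ray transform on
1+1 tensors over ℝ³ with metric `g` at `(x, ξ)`: the expression
`C(−12 g^{ik} ∂²|ξ|/∂ξ_j∂ξ_ℓ + ∂⁴|ξ|³/∂ξ_i∂ξ_j∂ξ_k∂ξ_ℓ)` with `C = −√π/(3·2^{5/2})` equals
the stated explicit tensor expression. -/
theorem normal_operator_principal_symbol (g : Matrix (Fin 3) (Fin 3) ℝ) (hg : g.PosDef)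
    (ξ : Fin 3 → ℝ) (hξ : ξ ≠ 0) :
    let gup := g⁻¹
    let nrm : (Fin 3 → ℝ) → ℝ := fun p => Real.sqrt (∑ i, ∑ j, gup i j * p i * p j)
    let pd : Fin 3 → ((Fin 3 → ℝ) → ℝ) → ((Fin 3 → ℝ) → ℝ) := fun m f p =>
      fderiv ℝ f p (Pi.single m 1)
    let xiUp : Fin 3 → ℝ := fun i => ∑ j, gup i j * ξ j
    let n : ℝ := nrm ξ
    let C : ℝ := -(Real.sqrt Real.pi / (3 * 2 ^ ((5 : ℝ) / 2)))
    ∀ i j k l : Fin 3,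
      C * (-12 * gup i k * pd j (pd l nrm) ξ
          + pd i (pd j (pd k (pd l (fun p => nrm p ^ 3)))) ξ)
      = C * (-12 * gup i k / n * (gup j l - xiUp j * xiUp l / n ^ 2)
          + 9 / n ^ 5 * xiUp i * xiUp j * xiUp k * xiUp l
          + 3 / n * (gup j k * gup i l + gup i k * gup j l + gup k l * gup i j)
          - 3 / n ^ 3 * (gup i j * xiUp k * xiUp l + gup i k * xiUp j * xiUp l
              + gup i l * xiUp j * xiUp k + gup j k * xiUp i * xiUp l
              + gup j l * xiUp i * xiUp k + gup k l * xiUp i * xiUp j)) := by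
  intro gup nrm pd xiUp n C i j k l
  have hA : ∀ a b, gup a b = gup b a := by
    intro a b
    have h := (hg.1.inv).apply a b
    simpa using h.symm
  have hQξ : 0 < Q gup ξ := by
    have h := (hg.inv).dotProduct_mulVec_pos hξ
    have hconv : dotProduct (star ξ) (g⁻¹ *ᵥ ξ) = Q gup ξ := by
      simp only [dotProduct, Matrix.mulVec, star_trivial, Q]
      refine Finset.sum_congr rfl fun a _ => ?_
      rw [Finset.mul_sum]
      refine Finset.sum_congr rfl fun b _ => ?_
      ring
    rwa [hconv] at h
  have hSopen : IsOpen {p : Fin 3 → ℝ | 0 < Q gup p} :=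
    isOpen_lt continuous_const (Q_continuous gup)
  -- second derivative of nrm
  have e1 : pd l nrm =ᶠ[nhds ξ] fun p => U gup l p * (Real.sqrt (Q gup p))⁻¹ := by
    filter_upwards [hSopen.mem_nhds hQξ] with p hp
    show fderiv ℝ (fun q => Real.sqrt (Q gup q)) p (Pi.single l 1) = _
    rw [pd_sqrtQ gup hA p hp l, div_eq_mul_inv]
  have h2nd : pd j (pd l nrm) ξ
      = gup l j / Real.sqrt (Q gup ξ) - U gup l ξ * U gup j ξ / Real.sqrt (Q gup ξ) ^ 3 := by
    show fderiv ℝ (pd l nrm) ξ (Pi.single j 1) = _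
    rw [e1.fderiv_eq, pd_F1 gup hA l ξ hQξ j]
  -- fourth derivative of nrm ^ 3
  have c1 : ∀ p, 0 < Q gup p →
      pd l (fun q => nrm q ^ 3) p = 3 * Real.sqrt (Q gup p) * U gup l p := by
    intro p hp
    show fderiv ℝ (fun q => Real.sqrt (Q gup q) ^ 3) p (Pi.single l 1) = _
    rw [pd_cube gup hA p hp l]
  have c2 : ∀ p, 0 < Q gup p →
      pd k (pd l (fun q => nrm q ^ 3)) p
        = 3 * U gup k p * U gup l p * (Real.sqrt (Q gup p))⁻¹
          + 3 * Real.sqrt (Q gup p) * gup l k := by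
    intro p hp
    have heq : pd l (fun q => nrm q ^ 3) =ᶠ[nhds p]
        fun q => 3 * Real.sqrt (Q gup q) * U gup l q := by
      filter_upwards [hSopen.mem_nhds hp] with q hq
      exact c1 q hq
    show fderiv ℝ (pd l (fun q => nrm q ^ 3)) p (Pi.single k 1) = _
    rw [heq.fderiv_eq, pd_G1 gup hA l p hp k]
  have c3 : ∀ p, 0 < Q gup p →
      pd j (pd k (pd l (fun q => nrm q ^ 3))) p
        = 3 * (gup k j * U gup l p + gup l j * U gup k p + gup l k * U gup j p)
            * (Real.sqrt (Q gup p))⁻¹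
          - 3 * (U gup k p * U gup l p * U gup j p) * (Real.sqrt (Q gup p) ^ 3)⁻¹ := by
    intro p hp
    have heq : pd k (pd l (fun q => nrm q ^ 3)) =ᶠ[nhds p]
        fun q => 3 * U gup k q * U gup l q * (Real.sqrt (Q gup q))⁻¹
          + 3 * Real.sqrt (Q gup q) * gup l k := by
      filter_upwards [hSopen.mem_nhds hp] with q hq
      exact c2 q hq
    show fderiv ℝ (pd k (pd l (fun q => nrm q ^ 3))) p (Pi.single j 1) = _
    rw [heq.fderiv_eq, pd_G2 gup hA k l p hp j]
  have c4 : pd i (pd j (pd k (pd l (fun q => nrm q ^ 3)))) ξ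
      = 9 * U gup i ξ * U gup j ξ * U gup k ξ * U gup l ξ * (Real.sqrt (Q gup ξ) ^ 5)⁻¹
        - 3 * (gup j i * U gup k ξ * U gup l ξ + gup k i * U gup j ξ * U gup l ξ
            + gup l i * U gup j ξ * U gup k ξ + gup k j * U gup l ξ * U gup i ξ
            + gup l j * U gup k ξ * U gup i ξ + gup l k * U gup j ξ * U gup i ξ)
          * (Real.sqrt (Q gup ξ) ^ 3)⁻¹
        + 3 * (gup k j * gup l i + gup l j * gup k i + gup l k * gup j i)
          * (Real.sqrt (Q gup ξ))⁻¹ := by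
    have heq : pd j (pd k (pd l (fun q => nrm q ^ 3))) =ᶠ[nhds ξ]
        fun q => 3 * (gup k j * U gup l q + gup l j * U gup k q + gup l k * U gup j q)
            * (Real.sqrt (Q gup q))⁻¹
          - 3 * (U gup k q * U gup l q * U gup j q) * (Real.sqrt (Q gup q) ^ 3)⁻¹ := by
      filter_upwards [hSopen.mem_nhds hQξ] with q hq
      exact c3 q hq
    show fderiv ℝ (pd j (pd k (pd l (fun q => nrm q ^ 3)))) ξ (Pi.single i 1) = _
    rw [heq.fderiv_eq, pd_G3 gup hA j k l ξ hQξ i]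
  -- now plug in
  have hn : n = Real.sqrt (Q gup ξ) := rfl
  have hxu : ∀ m, xiUp m = U gup m ξ := fun m => (U_apply gup m ξ).symm
  have hs : Real.sqrt (Q gup ξ) ≠ 0 := (Real.sqrt_pos.2 hQξ).ne'
  have key : -12 * gup i k * pd j (pd l nrm) ξ
          + pd i (pd j (pd k (pd l (fun p => nrm p ^ 3)))) ξ
      = -12 * gup i k / n * (gup j l - xiUp j * xiUp l / n ^ 2)
          + 9 / n ^ 5 * xiUp i * xiUp j * xiUp k * xiUp l
          + 3 / n * (gup j k * gup i l + gup i k * gup j l + gup k l * gup i j)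
          - 3 / n ^ 3 * (gup i j * xiUp k * xiUp l + gup i k * xiUp j * xiUp l
              + gup i l * xiUp j * xiUp k + gup j k * xiUp i * xiUp l
              + gup j l * xiUp i * xiUp k + gup k l * xiUp i * xiUp j) := by
    rw [h2nd, c4, hn]
    simp only [hxu]
    rw [hA l j, hA j i, hA k i, hA l i, hA k j, hA l k]
    set s := Real.sqrt (Q gup ξ) with hsdef
    field_simp
    ring
  rw [key]
end
end
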